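/- Asymptotic normalization for the probabilistic Call-by-Value λ-calculus: for every multi-distribution m, the set Lim(m,⇒) = { p : m ⇒⇓ p } has a greatest element ⟦m⟧, and for every subdistribution p over NF, m ⇉E⇓ p if and only if p = ⟦m⟧; in particular every ⇉E-sequence from m has limit ⟦m⟧, i.e. ⇉E is an asymptotically normalizing strategy for ⇒ with respect to obsN. -/

import Mathlib

/-- Terms of the probabilistic Call-by-Value λ-calculus `Λ⊕`, in de Bruijn
representation: `M ::= x | λx.M | M M | M ⊕ M`. -/
inductive PTm : Type
  | var : ℕ → PTm
  | lam : PTm → PTm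
  | app : PTm → PTm → PTm
  | oplus : PTm → PTm → PTm
deriving DecidableEq

namespace PTm

/-- Lift (shift by one) the free variables of index `≥ d`. -/
def lift (d : ℕ) : PTm → PTm
  | var n => if n < d then var n else var (n + 1)
  | lam M => lam (lift (d + 1) M)
  | app M N => app (lift d M) (lift d N)
  | oplus M N => oplus (lift d M) (lift d N)

/-- Capture-avoiding substitution `M[N/k]`. -/
def subst : PTm → ℕ → PTm → PTm
  | var n, k, N => if n = k then N else if k < n then var (n - 1) else var n
  | lam M, k, N => lam (subst M (k + 1) (lift 0 N))
  | app M₁ M₂, k, N => app (subst M₁ k N) (subst M₂ k N)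
  | oplus M₁ M₂, k, N => oplus (subst M₁ k N) (subst M₂ k N)

end PTm

/-- Values: variables and abstractions. -/
inductive IsValue : PTm → Prop
  | var (n : ℕ) : IsValue (PTm.var n)
  | lam (M : PTm) : IsValue (PTm.lam M)

/-- Full βv-reduction on terms: closure of `(λx.M)V ↦βv M[V/x]` (`V` a value) under
arbitrary contexts `C ::= ⟨⟩ | λx.C | C M | M C | C ⊕ M | M ⊕ C`. -/
inductive FullBv : PTm → PTm → Prop
  | beta {M V} : IsValue V → FullBv (PTm.app (PTm.lam M) V) (M.subst 0 V)
  | lam {M M'} : FullBv M M' → FullBv (PTm.lam M) (PTm.lam M')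
  | appL {M M' N} : FullBv M M' → FullBv (PTm.app M N) (PTm.app M' N)
  | appR {M N N'} : FullBv N N' → FullBv (PTm.app M N) (PTm.app M N')
  | oplusL {M M' N} : FullBv M M' → FullBv (PTm.oplus M N) (PTm.oplus M' N)
  | oplusR {M N N'} : FullBv N N' → FullBv (PTm.oplus M N) (PTm.oplus M N')

/-- Weak βv-reduction: closure of `↦βv` under weak contexts `W ::= ⟨⟩ | W M | M W`. -/
inductive WeakBv : PTm → PTm → Prop
  | beta {M V} : IsValue V → WeakBv (PTm.app (PTm.lam M) V) (M.subst 0 V)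
  | appL {M M' N} : WeakBv M M' → WeakBv (PTm.app M N) (PTm.app M' N)
  | appR {M N N'} : WeakBv N N' → WeakBv (PTm.app M N) (PTm.app M N')

/-- `OplusRed M M₁ M₂` : `M = W⟨P ⊕ Q⟩` for a weak context `W`, with branches
`M₁ = W⟨P⟩` and `M₂ = W⟨Q⟩`. -/
inductive OplusRed : PTm → PTm → PTm → Prop
  | root (M N : PTm) : OplusRed (PTm.oplus M N) M N
  | appL {P P₁ P₂ Q} : OplusRed P P₁ P₂ →
      OplusRed (PTm.app P Q) (PTm.app P₁ Q) (PTm.app P₂ Q)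
  | appR {P Q Q₁ Q₂} : OplusRed Q Q₁ Q₂ →
      OplusRed (PTm.app P Q) (PTm.app P Q₁) (PTm.app P Q₂)

/-- Multi-distributions: finite multisets of pairs `(p, M)`. -/
abbrev MDist := Multiset (NNReal × PTm)

/-- The multi-distribution `[1 M]`. -/
def single (M : PTm) : MDist := {((1 : NNReal), M)}

/-- A multi-distribution proper: all probabilities are in `(0,1]` and their sum is `≤ 1`. -/
def IsMDist (m : MDist) : Prop :=
  (∀ q ∈ m, 0 < q.1 ∧ q.1 ≤ 1) ∧ (m.map Prod.fst).sum ≤ 1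

/-- One-step reduction `→ := →βv ∪ →⊕` from terms to multi-distributions:
`C⟨(λx.M)V⟩ →βv [C⟨M[V/x]⟩]` and `W⟨M ⊕ N⟩ →⊕ [½ W⟨M⟩, ½ W⟨N⟩]`. -/
inductive Step : PTm → MDist → Prop
  | bv {M M'} : FullBv M M' → Step M (single M')
  | oplus {M M₁ M₂} : OplusRed M M₁ M₂ →
      Step M {((1 : NNReal) / 2, M₁), ((1 : NNReal) / 2, M₂)}

/-- Surface reduction `→s`: weak βv-steps together with all `→⊕`-steps. -/
inductive SStep : PTm → MDist → Prop
  | bv {M M'} : WeakBv M M' → SStep M (single M')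
  | oplus {M M₁ M₂} : OplusRed M M₁ M₂ →
      SStep M {((1 : NNReal) / 2, M₁), ((1 : NNReal) / 2, M₂)}

/-- A term is normal if it has no `→`-step. -/
def TmNormal (M : PTm) : Prop := ∀ m, ¬ Step M m

/-- A term is surface-normal if it has no `→s`-step. -/
def SurfNormal (M : PTm) : Prop := ∀ m, ¬ SStep M m

/-- The unbiased βv-strategy `⊳βv` on `Λ⊕`: weak βv-steps as long as there are any;
once the term has no weak βv-redex, iterate in the subterms. -/
inductive UnbBv : PTm → PTm → Prop
  | weak {M M'} : WeakBv M M' → UnbBv M M'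
  | lam {P P'} : (∀ s, ¬ WeakBv (PTm.lam P) s) → UnbBv P P' →
      UnbBv (PTm.lam P) (PTm.lam P')
  | appL {P P' Q} : (∀ s, ¬ WeakBv (PTm.app P Q) s) → UnbBv P P' →
      UnbBv (PTm.app P Q) (PTm.app P' Q)
  | appR {P Q Q'} : (∀ s, ¬ WeakBv (PTm.app P Q) s) → UnbBv Q Q' →
      UnbBv (PTm.app P Q) (PTm.app P Q')
  | oplusL {P P' Q} : (∀ s, ¬ WeakBv (PTm.oplus P Q) s) → UnbBv P P' →
      UnbBv (PTm.oplus P Q) (PTm.oplus P' Q)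
  | oplusR {P Q Q'} : (∀ s, ¬ WeakBv (PTm.oplus P Q) s) → UnbBv Q Q' →
      UnbBv (PTm.oplus P Q) (PTm.oplus P Q')

/-- Unbiased evaluation `⊳E` from terms to multi-distributions: a surface step if the
term is not surface-normal; otherwise an unbiased βv-step. -/
inductive EStep : PTm → MDist → Prop
  | surf {M m} : ¬ SurfNormal M → SStep M m → EStep M m
  | unb {M M'} : SurfNormal M → UnbBv M M' → EStep M (single M')

/-- Internal steps `⋫E`: `→`-steps that are not `⊳E`-steps. -/
def IStep (M : PTm) (m : MDist) : Prop := Step M m ∧ ¬ EStep M m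

/-- Scalar multiplication `p • m` of a multi-distribution. -/
def scale (p : NNReal) (m : MDist) : MDist := m.map fun q => (p * q.1, q.2)

/-- Lifting of a relation `r` from terms to multi-distributions, to a relation on
multi-distributions: `[M] ⇒r [M]`; `[M] ⇒r m` whenever `M r m`; and
`[pᵢ Mᵢ]ᵢ ⇒r Σᵢ pᵢ·mᵢ` whenever `[Mᵢ] ⇒r mᵢ` for each `i`. -/
inductive Lift (r : PTm → MDist → Prop) : MDist → MDist → Prop
  | zero : Lift r 0 0
  | keep {p M m n} : Lift r m n → Lift r ((p, M) ::ₘ m) ((p, M) ::ₘ n)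
  | step {p M d m n} : r M d → Lift r m n → Lift r ((p, M) ::ₘ m) (scale p d + n)

/-- Full lifting of a relation `r` from terms to multi-distributions: as `Lift`, but a
component may stay put only if it is a normal form. -/
inductive FullLift (r : PTm → MDist → Prop) : MDist → MDist → Prop
  | zero : FullLift r 0 0
  | keep {p M m n} : TmNormal M → FullLift r m n →
      FullLift r ((p, M) ::ₘ m) ((p, M) ::ₘ n)
  | step {p M d m n} : r M d → FullLift r m n →
      FullLift r ((p, M) ::ₘ m) (scale p d + n)

open Classical in
/-- The observation `obsN`: the subdistribution over normal forms carried by a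
multi-distribution, `obsN(m)(N) = Σ { pᵢ : Mᵢ = N }` for `N` normal (and `0` on
non-normal terms). Subdistributions are ordered pointwise. -/
noncomputable def obsN (m : MDist) : PTm → NNReal := fun N =>
  if TmNormal N then ((m.filter fun q => q.2 = N).map Prod.fst).sum else 0

/-- A multi-distribution is `R`-normal if it has no `R`-successor. -/
def MNormal (R : MDist → MDist → Prop) (m : MDist) : Prop := ∀ n, ¬ R m n

/-- An `R`-sequence from `m`: at each step either an `R`-step is performed, or the
current multi-distribution is `R`-normal and the sequence stays constant. -/
def MSeq (R : MDist → MDist → Prop) (m : MDist) (f : ℕ → MDist) : Prop :=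
  f 0 = m ∧ ∀ i, R (f i) (f (i + 1)) ∨ (MNormal R (f i) ∧ f (i + 1) = f i)

/-- `m R⇓ p` : some `R`-sequence from `m` has limit (supremum of the pointwise-ordered
subdistributions `obsN (f i)`) equal to `p`. -/
def MConv (R : MDist → MDist → Prop) (m : MDist) (p : PTm → NNReal) : Prop :=
  ∃ f : ℕ → MDist, MSeq R m f ∧ IsLUB (Set.range fun i => obsN (f i)) p


/-! ### Layer 1: de Bruijn syntax lemmas -/

namespace PTm

@[simp] lemma lift_var (d n : ℕ) :
    lift d (var n) = if n < d then var n else var (n + 1) := rfl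
@[simp] lemma lift_lam (d : ℕ) (M : PTm) : lift d (lam M) = lam (lift (d+1) M) := rfl
@[simp] lemma lift_app (d : ℕ) (M N : PTm) :
    lift d (app M N) = app (lift d M) (lift d N) := rfl
@[simp] lemma lift_oplus (d : ℕ) (M N : PTm) :
    lift d (oplus M N) = oplus (lift d M) (lift d N) := rfl

lemma lift_lift (t : PTm) : ∀ i j, i ≤ j →
    lift i (lift j t) = lift (j+1) (lift i t) := by
  induction t with
  | var n =>
    intro i j hij
    simp only [lift]
    by_cases h1 : n < j
    · by_cases h2 : n < i
      · simp [h1, h2, Nat.lt_succ_of_lt h1]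
      · simp only [if_pos h1, if_neg h2, lift]
        have : n + 1 < j + 1 := Nat.succ_lt_succ h1
        simp [this, h2]
    · have h2 : ¬ n < i := fun h => h1 (lt_of_lt_of_le h hij)
      simp only [if_neg h1, if_neg h2, lift]
      have : ¬ n + 1 < i := fun h => h2 (Nat.lt_of_succ_lt h)
      have h3 : ¬ n + 1 < j + 1 := fun h => h1 (Nat.lt_of_succ_lt_succ h)
      simp [this, h3]
  | lam M ih =>
    intro i j hij
    simp [lift, ih (i+1) (j+1) (Nat.succ_le_succ hij)]
  | app M N ihM ihN => intro i j hij; simp [lift, ihM i j hij, ihN i j hij]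
  | oplus M N ihM ihN => intro i j hij; simp [lift, ihM i j hij, ihN i j hij]

lemma lift_subst (t : PTm) : ∀ d k (N : PTm), d ≤ k →
    lift d (subst t k N) = subst (lift d t) (k+1) (lift d N) := by
  induction t with
  | var n =>
    intro d k N hdk
    simp only [subst]
    rcases Nat.lt_trichotomy n k with h | h | h
    · -- n < k
      have hne : n ≠ k := Nat.ne_of_lt h
      have hnk : ¬ k < n := Nat.not_lt.2 (Nat.le_of_lt h)
      simp only [if_neg hne, if_neg hnk]
      by_cases h2 : n < d
      · simp only [lift_var, if_pos h2, subst]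
        have : n ≠ k + 1 := by omega
        have : _ := this
        simp only [this, if_neg this]
        have : ¬ k + 1 < n := by omega
        simp [this]
      · simp only [lift_var, if_neg h2, subst]
        have h3 : n + 1 ≠ k + 1 := by omega
        have h4 : ¬ k + 1 < n + 1 := by omega
        simp [h3, h4, hne]
    · -- n = k
      subst h
      have h2 : ¬ n < d := by omega
      simp [subst, h2]
    · -- k < n
      have hne : n ≠ k := by omega
      simp only [if_neg hne, if_pos h, lift_var]
      have h2 : ¬ n - 1 < d := by omega
      have h3 : ¬ n < d := by omega
      simp only [if_neg h2, if_neg h3, subst]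
      have h4 : n - 1 + 1 = n := by omega
      have h5 : n + 1 ≠ k + 1 := by omega
      have h6 : k + 1 < n + 1 := by omega
      simp [h4, h5, h6, hne]
  | lam M ih =>
    intro d k N hdk
    simp only [subst, lift_lam, lam.injEq]
    rw [ih (d+1) (k+1) (lift 0 N) (Nat.succ_le_succ hdk)]
    rw [lift_lift N 0 d (Nat.zero_le d)]
  | app M₁ M₂ ih₁ ih₂ => intro d k N hdk; simp [subst, ih₁ d k N hdk, ih₂ d k N hdk]
  | oplus M₁ M₂ ih₁ ih₂ => intro d k N hdk; simp [subst, ih₁ d k N hdk, ih₂ d k N hdk]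

lemma subst_lift (t : PTm) : ∀ k (N : PTm), subst (lift k t) k N = t := by
  induction t with
  | var n =>
    intro k N
    simp only [lift_var]
    by_cases h : n < k
    · have h1 : n ≠ k := by omega
      have h2 : ¬ k < n := by omega
      simp [subst, h1, h2, h]
    · have h1 : n + 1 ≠ k := by omega
      have h2 : k < n + 1 := by omega
      simp [subst, h, h1, h2]
  | lam M ih => intro k N; simp [subst, ih (k+1) (lift 0 N)]
  | app M₁ M₂ ih₁ ih₂ => intro k N; simp [subst, ih₁, ih₂]
  | oplus M₁ M₂ ih₁ ih₂ => intro k N; simp [subst, ih₁, ih₂]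

lemma lift_subst_high (t : PTm) : ∀ d k (N : PTm), k ≤ d →
    lift d (subst t k N) = subst (lift (d+1) t) k (lift d N) := by
  induction t with
  | var n =>
    intro d k N hkd
    simp only [subst]
    rcases Nat.lt_trichotomy n k with h | h | h
    · have h1 : n ≠ k := by omega
      have h2 : ¬ k < n := by omega
      have h3 : n < d := by omega
      have h4 : n < d + 1 := by omega
      simp [h1, h2, h3, h4, subst, lift_var]
    · subst h
      have h4 : n < d + 1 := by omega
      simp [lift_var, h4, subst]
    · have h1 : n ≠ k := by omega
      simp only [if_neg h1, if_pos h, lift_var]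
      by_cases h2 : n - 1 < d
      · have h3 : n < d + 1 := by omega
        simp only [if_pos h2, if_pos h3, subst]
        have h5 : ¬ n < k := by omega
        have : n ≠ k := h1
        simp [this, h]
      · have h3 : ¬ n < d + 1 := by omega
        simp only [if_neg h2, if_neg h3, subst]
        have h5 : n + 1 ≠ k := by omega
        have h6 : k < n + 1 := by omega
        have h7 : n - 1 + 1 = n := by omega
        simp [h5, h6, h7]
  | lam M ih =>
    intro d k N hkd
    simp only [subst, lift_lam, lam.injEq]
    rw [ih (d+1) (k+1) (lift 0 N) (Nat.succ_le_succ hkd)]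
    rw [lift_lift N 0 d (Nat.zero_le d)]
  | app M₁ M₂ ih₁ ih₂ => intro d k N h; simp [subst, ih₁ d k N h, ih₂ d k N h]
  | oplus M₁ M₂ ih₁ ih₂ => intro d k N h; simp [subst, ih₁ d k N h, ih₂ d k N h]

lemma subst_subst (t : PTm) : ∀ i j (u v : PTm), i ≤ j →
    (t.subst i u).subst j v = (t.subst (j+1) (lift i v)).subst i (u.subst j v) := by
  induction t with
  | var n =>
    intro i j u v hij
    rcases Nat.lt_trichotomy n i with h | h | h
    · -- n < i ≤ j
      have h1 : n ≠ i := by omega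
      have h2 : ¬ i < n := by omega
      have h3 : n ≠ j := by omega
      have h4 : ¬ j < n := by omega
      have h5 : n ≠ j + 1 := by omega
      have h6 : ¬ j + 1 < n := by omega
      simp [subst, h1, h2, h3, h4, h5, h6]
    · subst h
      have h5 : n ≠ j + 1 := by omega
      have h6 : ¬ j + 1 < n := by omega
      simp [subst, h5, h6]
    · -- i < n
      have h1 : n ≠ i := by omega
      simp only [subst, if_neg h1, if_pos h]
      rcases Nat.lt_trichotomy (n-1) j with h2 | h2 | h2
      · have h3 : n - 1 ≠ j := by omega
        have h4 : ¬ j < n - 1 := by omega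
        have h5 : n ≠ j + 1 := by omega
        have h6 : ¬ j + 1 < n := by omega
        simp [subst, h3, h4, h5, h6, h1, h]
      · have h5 : n = j + 1 := by omega
        have h3 : n - 1 = j := by omega
        simp [subst, h5, h3, subst_lift]
      · have h3 : n - 1 ≠ j := by omega
        have h5 : n ≠ j + 1 := by omega
        have h6 : j + 1 < n := by omega
        have h7 : n - 1 ≠ i := by omega
        have h8 : i < n - 1 := by omega
        simp [subst, h3, h2, h5, h6, h7, h8]
  | lam M ih =>
    intro i j u v hij
    simp only [subst, lam.injEq]
    rw [ih (i+1) (j+1) (lift 0 u) (lift 0 v) (Nat.succ_le_succ hij)]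
    rw [lift_lift v 0 i (Nat.zero_le i)]
    rw [lift_subst u 0 j v (Nat.zero_le j)]
  | app M₁ M₂ ih₁ ih₂ => intro i j u v h; simp [subst, ih₁ i j u v h, ih₂ i j u v h]
  | oplus M₁ M₂ ih₁ ih₂ => intro i j u v h; simp [subst, ih₁ i j u v h, ih₂ i j u v h]

end PTm

lemma IsValue.lift {V : PTm} (h : IsValue V) (d : ℕ) : IsValue (PTm.lift d V) := by
  cases h with
  | var n => by_cases h : n < d <;> simp [PTm.lift, h] <;> constructor
  | lam M => exact IsValue.lam _

lemma IsValue.subst {V N : PTm} (h : IsValue V) (k : ℕ) (hN : IsValue N) :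
    IsValue (PTm.subst V k N) := by
  cases h with
  | var n =>
    simp only [PTm.subst]
    by_cases h1 : n = k
    · simpa [h1]
    · by_cases h2 : k < n <;> simp [h1, h2] <;> constructor
  | lam M => exact IsValue.lam _

/-! ### Layer 2: basic facts about the reduction relations on terms -/

open PTm

/-- No weak step out of a value. -/
lemma IsValue.no_weak {V s : PTm} (h : IsValue V) : ¬ WeakBv V s := by
  cases h <;> intro hs <;> cases hs

lemma IsValue.no_oplus {V a b : PTm} (h : IsValue V) : ¬ OplusRed V a b := by
  cases h <;> intro hs <;> cases hs

lemma WeakBv.toFull {M M' : PTm} (h : WeakBv M M') : FullBv M M' := by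
  induction h with
  | beta hv => exact FullBv.beta hv
  | appL _ ih => exact FullBv.appL ih
  | appR _ ih => exact FullBv.appR ih

lemma UnbBv.toFull {M M' : PTm} (h : UnbBv M M') : FullBv M M' := by
  induction h with
  | weak hw => exact hw.toFull
  | lam _ _ ih => exact FullBv.lam ih
  | appL _ _ ih => exact FullBv.appL ih
  | appR _ _ ih => exact FullBv.appR ih
  | oplusL _ _ ih => exact FullBv.oplusL ih
  | oplusR _ _ ih => exact FullBv.oplusR ih

/-- Weak-normal terms. -/
def WkNf (M : PTm) : Prop := ∀ s, ¬ WeakBv M s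
/-- Terms with no `⊕`-redex at a weak position. -/
def NoOp (M : PTm) : Prop := ∀ a b, ¬ OplusRed M a b
/-- Full βv-normal terms. -/
def FullNf (M : PTm) : Prop := ∀ s, ¬ FullBv M s

lemma IsValue.wknf {V : PTm} (h : IsValue V) : WkNf V := fun _ => h.no_weak
lemma IsValue.noop {V : PTm} (h : IsValue V) : NoOp V := fun _ _ => h.no_oplus

lemma wknf_var (n : ℕ) : WkNf (var n) := fun _ h => by cases h
lemma wknf_lam (M : PTm) : WkNf (lam M) := fun _ h => by cases h
lemma wknf_oplus (A B : PTm) : WkNf (oplus A B) := fun _ h => by cases h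
lemma noop_var (n : ℕ) : NoOp (var n) := fun _ _ h => by cases h
lemma noop_lam (M : PTm) : NoOp (lam M) := fun _ _ h => by cases h

lemma wknf_app_iff {P Q : PTm} :
    WkNf (app P Q) ↔ WkNf P ∧ WkNf Q ∧ ¬ ((∃ A, P = lam A) ∧ IsValue Q) := by
  constructor
  · intro h
    refine ⟨fun s hs => h _ (WeakBv.appL hs), fun s hs => h _ (WeakBv.appR hs), ?_⟩
    rintro ⟨⟨A, rfl⟩, hv⟩
    exact h _ (WeakBv.beta hv)
  · rintro ⟨h1, h2, h3⟩ s hs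
    cases hs with
    | beta hv => exact h3 ⟨⟨_, rfl⟩, hv⟩
    | appL hw => exact h1 _ hw
    | appR hw => exact h2 _ hw

lemma noop_app_iff {P Q : PTm} : NoOp (app P Q) ↔ NoOp P ∧ NoOp Q := by
  constructor
  · intro h
    exact ⟨fun a b hab => h _ _ (OplusRed.appL hab),
           fun a b hab => h _ _ (OplusRed.appR hab)⟩
  · rintro ⟨h1, h2⟩ a b hab
    cases hab with
    | appL hh => exact h1 _ _ hh
    | appR hh => exact h2 _ _ hh

lemma surfNormal_iff {M : PTm} : SurfNormal M ↔ WkNf M ∧ NoOp M := by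
  constructor
  · intro h
    constructor
    · intro s hs; exact h _ (SStep.bv hs)
    · intro a b hab; exact h _ (SStep.oplus hab)
  · rintro ⟨h1, h2⟩ d hd
    cases hd with
    | bv hw => exact h1 _ hw
    | oplus ho => exact h2 _ _ ho

lemma SurfNormal.wknf {M : PTm} (h : SurfNormal M) : WkNf M := (surfNormal_iff.1 h).1
lemma SurfNormal.noop {M : PTm} (h : SurfNormal M) : NoOp M := (surfNormal_iff.1 h).2

lemma surfNormal_lam (M : PTm) : SurfNormal (lam M) :=
  surfNormal_iff.2 ⟨wknf_lam M, noop_lam M⟩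
lemma surfNormal_var (n : ℕ) : SurfNormal (var n) :=
  surfNormal_iff.2 ⟨wknf_var n, noop_var n⟩
lemma not_surfNormal_oplus (A B : PTm) : ¬ SurfNormal (oplus A B) := fun h =>
  h _ (SStep.oplus (OplusRed.root A B))

lemma surfNormal_app_iff {P Q : PTm} :
    SurfNormal (app P Q) ↔
      SurfNormal P ∧ SurfNormal Q ∧ ¬ ((∃ A, P = lam A) ∧ IsValue Q) := by
  simp only [surfNormal_iff, wknf_app_iff, noop_app_iff]
  tauto

lemma tmNormal_iff {M : PTm} : TmNormal M ↔ FullNf M ∧ NoOp M := by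
  constructor
  · intro h
    exact ⟨fun s hs => h _ (Step.bv hs), fun a b hab => h _ (Step.oplus hab)⟩
  · rintro ⟨h1, h2⟩ d hd
    cases hd with
    | bv hw => exact h1 _ hw
    | oplus ho => exact h2 _ _ ho

lemma TmNormal.fullNf {M : PTm} (h : TmNormal M) : FullNf M := (tmNormal_iff.1 h).1
lemma TmNormal.surf {M : PTm} (h : TmNormal M) : SurfNormal M :=
  surfNormal_iff.2 ⟨fun s hs => h.fullNf s hs.toFull, (tmNormal_iff.1 h).2⟩

/-- A full step out of a weak-normal term sends non-lams to non-lams, non-values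
to non-values. -/
lemma shape_pres {M M' : PTm} (hn : WkNf M) (h : FullBv M M') :
    ((∃ B, M' = lam B) → ∃ B, M = lam B) ∧ (IsValue M' → IsValue M) := by
  cases h with
  | beta hv => exact absurd (WeakBv.beta hv) (hn _)
  | lam h => exact ⟨fun _ => ⟨_, rfl⟩, fun _ => IsValue.lam _⟩
  | appL h => exact ⟨(by rintro ⟨B, hB⟩; cases hB), (fun hv => by cases hv)⟩
  | appR h => exact ⟨(by rintro ⟨B, hB⟩; cases hB), (fun hv => by cases hv)⟩
  | oplusL h => exact ⟨(by rintro ⟨B, hB⟩; cases hB), (fun hv => by cases hv)⟩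
  | oplusR h => exact ⟨(by rintro ⟨B, hB⟩; cases hB), (fun hv => by cases hv)⟩

/-- Full reduction preserves weak normality. -/
lemma WkNf.pres {M M' : PTm} (hn : WkNf M) (h : FullBv M M') : WkNf M' := by
  induction h with
  | beta hv => exact absurd (WeakBv.beta hv) (hn _)
  | lam h ih => exact wknf_lam _
  | @appL P P' Q h ih =>
    rcases wknf_app_iff.1 hn with ⟨h1, h2, h3⟩
    refine wknf_app_iff.2 ⟨ih h1, h2, ?_⟩
    rintro ⟨hl, hv⟩
    exact h3 ⟨(shape_pres h1 h).1 hl, hv⟩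
  | @appR P Q Q' h ih =>
    rcases wknf_app_iff.1 hn with ⟨h1, h2, h3⟩
    refine wknf_app_iff.2 ⟨h1, ih h2, ?_⟩
    rintro ⟨hl, hv⟩
    exact h3 ⟨hl, (shape_pres h2 h).2 hv⟩
  | oplusL h ih => exact wknf_oplus _ _
  | oplusR h ih => exact wknf_oplus _ _

/-- Full reduction preserves surface normality. -/
lemma SurfNormal.pres {M M' : PTm} (hn : SurfNormal M) (h : FullBv M M') :
    SurfNormal M' := by
  induction h with
  | beta hv => exact absurd (WeakBv.beta hv) (hn.wknf _)
  | lam h ih => exact surfNormal_lam _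
  | @appL P P' Q h ih =>
    rcases surfNormal_app_iff.1 hn with ⟨h1, h2, h3⟩
    refine surfNormal_app_iff.2 ⟨ih h1, h2, ?_⟩
    rintro ⟨hl, hv⟩
    exact h3 ⟨(shape_pres h1.wknf h).1 hl, hv⟩
  | @appR P Q Q' h ih =>
    rcases surfNormal_app_iff.1 hn with ⟨h1, h2, h3⟩
    refine surfNormal_app_iff.2 ⟨h1, ih h2, ?_⟩
    rintro ⟨hl, hv⟩
    exact h3 ⟨hl, (shape_pres h2.wknf h).2 hv⟩
  | @oplusL A A' B h ih => exact absurd (OplusRed.root A B) (hn.noop _ _)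
  | @oplusR A B B' h ih => exact absurd (OplusRed.root A B) (hn.noop _ _)

/-- Diamond property of weak βv-reduction (weak redexes are pairwise disjoint). -/
lemma weak_diamond {M A B : PTm} (h1 : WeakBv M A) (h2 : WeakBv M B) :
    A = B ∨ ∃ C, WeakBv A C ∧ WeakBv B C := by
  induction h1 generalizing B with
  | @beta M₀ V hv =>
    cases h2 with
    | beta hv' => exact Or.inl rfl
    | appL hw => exact absurd hw ((wknf_lam _) _)
    | appR hw => exact absurd hw (hv.no_weak)
  | @appL P P' Q h ih =>
    cases h2 with
    | beta hv => exact absurd h ((wknf_lam _) _)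
    | appL hw =>
      rcases ih hw with rfl | ⟨C, hC1, hC2⟩
      · exact Or.inl rfl
      · exact Or.inr ⟨app C Q, WeakBv.appL hC1, WeakBv.appL hC2⟩
    | @appR _ _ Q' hw =>
      exact Or.inr ⟨app P' Q', WeakBv.appR hw, WeakBv.appL h⟩
  | @appR P Q Q' h ih =>
    cases h2 with
    | beta hv => exact absurd h hv.no_weak
    | @appL _ P' _ hw =>
      exact Or.inr ⟨app P' Q', WeakBv.appL hw, WeakBv.appR h⟩
    | appR hw =>
      rcases ih hw with rfl | ⟨C, hC1, hC2⟩
      · exact Or.inl rfl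
      · exact Or.inr ⟨app P C, WeakBv.appR hC1, WeakBv.appR hC2⟩

/-- A weak step commutes with an `⊕`-step (they are always disjoint). -/
lemma weak_oplus_comm {M P M₁ M₂ : PTm} (hw : WeakBv M P) (ho : OplusRed M M₁ M₂) :
    ∃ P₁ P₂, OplusRed P P₁ P₂ ∧ WeakBv M₁ P₁ ∧ WeakBv M₂ P₂ := by
  induction hw generalizing M₁ M₂ with
  | @beta M₀ V hv =>
    cases ho with
    | appL h => exact absurd h ((noop_lam _) _ _)
    | appR h => exact absurd h (hv.no_oplus)
  | @appL P₀ P₀' Q h ih =>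
    cases ho with
    | appL hh =>
      rcases ih hh with ⟨P₁, P₂, h1, h2, h3⟩
      exact ⟨app P₁ Q, app P₂ Q, OplusRed.appL h1, WeakBv.appL h2, WeakBv.appL h3⟩
    | @appR _ _ Q₁ Q₂ hh =>
      exact ⟨app P₀' Q₁, app P₀' Q₂, OplusRed.appR hh, WeakBv.appL h, WeakBv.appL h⟩
  | @appR P₀ Q Q' h ih =>
    cases ho with
    | @appL _ A₁ A₂ _ hh =>
      exact ⟨app A₁ Q', app A₂ Q', OplusRed.appL hh, WeakBv.appR h, WeakBv.appR h⟩
    | appR hh =>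
      rcases ih hh with ⟨P₁, P₂, h1, h2, h3⟩
      exact ⟨app P₀ P₁, app P₀ P₂, OplusRed.appR h1, WeakBv.appR h2, WeakBv.appR h3⟩

/-- Two `⊕`-steps: either identical or they commute. -/
lemma oplus_oplus {M A₁ A₂ B₁ B₂ : PTm}
    (h1 : OplusRed M A₁ A₂) (h2 : OplusRed M B₁ B₂) :
    (A₁ = B₁ ∧ A₂ = B₂) ∨
    ∃ C11 C12 C21 C22, OplusRed A₁ C11 C12 ∧ OplusRed A₂ C21 C22 ∧
      OplusRed B₁ C11 C21 ∧ OplusRed B₂ C12 C22 := by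
  induction h1 generalizing B₁ B₂ with
  | root X Y => cases h2 with | root => exact Or.inl ⟨rfl, rfl⟩
  | @appL P P₁ P₂ Q h ih =>
    cases h2 with
    | appL hh =>
      rcases ih hh with ⟨rfl, rfl⟩ | ⟨C11, C12, C21, C22, u1, u2, u3, u4⟩
      · exact Or.inl ⟨rfl, rfl⟩
      · exact Or.inr ⟨app C11 Q, app C12 Q, app C21 Q, app C22 Q,
          OplusRed.appL u1, OplusRed.appL u2, OplusRed.appL u3, OplusRed.appL u4⟩
    | @appR _ _ Q₁ Q₂ hh =>
      exact Or.inr ⟨app P₁ Q₁, app P₁ Q₂, app P₂ Q₁, app P₂ Q₂,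
        OplusRed.appR hh, OplusRed.appR hh, OplusRed.appL h, OplusRed.appL h⟩
  | @appR P Q Q₁ Q₂ h ih =>
    cases h2 with
    | @appL _ P₁ P₂ _ hh =>
      exact Or.inr ⟨app P₁ Q₁, app P₂ Q₁, app P₁ Q₂, app P₂ Q₂,
        OplusRed.appL hh, OplusRed.appL hh, OplusRed.appR h, OplusRed.appR h⟩
    | appR hh =>
      rcases ih hh with ⟨rfl, rfl⟩ | ⟨C11, C12, C21, C22, u1, u2, u3, u4⟩
      · exact Or.inl ⟨rfl, rfl⟩
      · exact Or.inr ⟨app P C11, app P C12, app P C21, app P C22,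
          OplusRed.appR u1, OplusRed.appR u2, OplusRed.appR u3, OplusRed.appR u4⟩

/-- Totality of the unbiased strategy: any full-reducible term has an unbiased step. -/
lemma unb_total {M M' : PTm} (h : FullBv M M') : ∃ X, UnbBv M X := by
  induction h with
  | @beta A V hv => exact ⟨_, UnbBv.weak (WeakBv.beta hv)⟩
  | @lam B B' h ih =>
    rcases ih with ⟨X, hX⟩
    exact ⟨_, UnbBv.lam (wknf_lam _) hX⟩
  | @appL P P' Q h ih =>
    by_cases hw : ∀ s, ¬ WeakBv (app P Q) s
    · rcases ih with ⟨X, hX⟩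
      exact ⟨_, UnbBv.appL hw hX⟩
    · push_neg at hw
      rcases hw with ⟨s, hs⟩
      exact ⟨s, UnbBv.weak hs⟩
  | @appR P Q Q' h ih =>
    by_cases hw : ∀ s, ¬ WeakBv (app P Q) s
    · rcases ih with ⟨X, hX⟩
      exact ⟨_, UnbBv.appR hw hX⟩
    · push_neg at hw
      rcases hw with ⟨s, hs⟩
      exact ⟨s, UnbBv.weak hs⟩
  | @oplusL A A' B h ih =>
    rcases ih with ⟨X, hX⟩
    exact ⟨_, UnbBv.oplusL (wknf_oplus _ _) hX⟩
  | @oplusR A B B' h ih =>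
    rcases ih with ⟨X, hX⟩
    exact ⟨_, UnbBv.oplusR (wknf_oplus _ _) hX⟩

/-- Totality of `⊳E` on non-normal terms. -/
lemma estep_total {M : PTm} (h : ¬ TmNormal M) : ∃ e, EStep M e := by
  by_cases hs : SurfNormal M
  · simp only [TmNormal, not_forall, not_not] at h
    rcases h with ⟨d, hd⟩
    cases hd with
    | bv hb =>
      rcases unb_total hb with ⟨X, hX⟩
      exact ⟨_, EStep.unb hs hX⟩
    | oplus ho => exact absurd ho (hs.noop _ _)
  · simp only [SurfNormal, not_forall, not_not] at hs
    rcases hs with ⟨d, hd⟩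
    exact ⟨d, EStep.surf (fun hc => hc _ hd) hd⟩

lemma EStep.toStep {M : PTm} {e : MDist} (h : EStep M e) : Step M e := by
  cases h with
  | surf _ hs =>
    cases hs with
    | bv hw => exact Step.bv hw.toFull
    | oplus ho => exact Step.oplus ho
  | unb _ hu => exact Step.bv hu.toFull

lemma EStep.not_normal {M : PTm} {e : MDist} (h : EStep M e) : ¬ TmNormal M :=
  fun hn => hn _ h.toStep

/-- Values remain values under full reduction. -/
lemma IsValue.pres {V V' : PTm} (hv : IsValue V) (h : FullBv V V') : IsValue V' := by
  cases hv with
  | var n => cases h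
  | lam M => cases h with | lam h => exact IsValue.lam _

/-! ### Layer 3: parallel reduction, confluence, weak-first factorization -/

open PTm

/-- Parallel βv-reduction (Tait–Martin-Löf / Takahashi). -/
inductive Par : PTm → PTm → Prop
  | var (n : ℕ) : Par (var n) (var n)
  | lam {B B'} : Par B B' → Par (lam B) (lam B')
  | app {P P' Q Q'} : Par P P' → Par Q Q' → Par (app P Q) (app P' Q')
  | oplus {A A' B B'} : Par A A' → Par B B' → Par (oplus A B) (oplus A' B')
  | beta {A A' V V'} : IsValue V → Par A A' → Par V V' →
      Par (app (lam A) V) (A'.subst 0 V')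

lemma Par.refl (M : PTm) : Par M M := by
  induction M with
  | var n => exact Par.var n
  | lam B ih => exact Par.lam ih
  | app P Q ih1 ih2 => exact Par.app ih1 ih2
  | oplus A B ih1 ih2 => exact Par.oplus ih1 ih2

lemma FullBv.toPar {M M' : PTm} (h : FullBv M M') : Par M M' := by
  induction h with
  | beta hv => exact Par.beta hv (Par.refl _) (Par.refl _)
  | lam _ ih => exact Par.lam ih
  | appL _ ih => exact Par.app ih (Par.refl _)
  | appR _ ih => exact Par.app (Par.refl _) ih
  | oplusL _ ih => exact Par.oplus ih (Par.refl _)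
  | oplusR _ ih => exact Par.oplus (Par.refl _) ih

lemma par_value {V X : PTm} (h : Par V X) (hv : IsValue V) : IsValue X := by
  cases hv with
  | var n => cases h; exact IsValue.var n
  | lam B => cases h with | lam _ => exact IsValue.lam _

lemma par_lam_inv {B X : PTm} (h : Par (lam B) X) :
    ∃ B', X = lam B' ∧ Par B B' := by
  cases h with | lam h => exact ⟨_, rfl, h⟩

lemma par_var_inv {n : ℕ} {X : PTm} (h : Par (var n) X) : X = var n := by
  cases h; rfl

lemma par_oplus_inv {A B X : PTm} (h : Par (oplus A B) X) :
    ∃ A' B', X = oplus A' B' ∧ Par A A' ∧ Par B B' := by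
  cases h with | oplus h1 h2 => exact ⟨_, _, rfl, h1, h2⟩

/-- Parallel reduction is preserved by lifting. -/
lemma Par.lift {M M' : PTm} (h : Par M M') : ∀ d, Par (PTm.lift d M) (PTm.lift d M') := by
  induction h with
  | var n => intro d; by_cases h : n < d <;> simp [PTm.lift, h] <;> exact Par.refl _
  | lam _ ih => intro d; exact Par.lam (ih (d+1))
  | app _ _ ih1 ih2 => intro d; exact Par.app (ih1 d) (ih2 d)
  | oplus _ _ ih1 ih2 => intro d; exact Par.oplus (ih1 d) (ih2 d)
  | @beta A A' V V' hv _ _ ihA ihV =>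
    intro d
    have : PTm.lift d (A'.subst 0 V') = (PTm.lift (d+1) A').subst 0 (PTm.lift d V') :=
      lift_subst_high A' d 0 V' (Nat.zero_le d)
    rw [lift_app, lift_lam, this]
    exact Par.beta (hv.lift d) (ihA (d+1)) (ihV d)

/-- Takahashi's substitution lemma (CbV: the substituted term is a value). -/
lemma par_subst {A A' : PTm} (h : Par A A') :
    ∀ k {N N' : PTm}, IsValue N → Par N N' →
      Par (A.subst k N) (A'.subst k N') := by
  induction h with
  | var n =>
    intro k N N' hv hN
    simp only [PTm.subst]
    by_cases h1 : n = k
    · simp [h1, hN]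
    · by_cases h2 : k < n <;> simp [h1, h2] <;> exact Par.refl _
  | lam _ ih =>
    intro k N N' hv hN
    exact Par.lam (ih (k+1) (hv.lift 0) (hN.lift 0))
  | app _ _ ih1 ih2 =>
    intro k N N' hv hN
    exact Par.app (ih1 k hv hN) (ih2 k hv hN)
  | oplus _ _ ih1 ih2 =>
    intro k N N' hv hN
    exact Par.oplus (ih1 k hv hN) (ih2 k hv hN)
  | @beta A₀ A₀' V V' hv _ _ ihA ihV =>
    intro k N N' hN hNp
    have key : (A₀'.subst 0 V').subst k N' =
        (A₀'.subst (k+1) (PTm.lift 0 N')).subst 0 (V'.subst k N') :=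
      subst_subst A₀' 0 k V' N' (Nat.zero_le k)
    simp only [PTm.subst, key]
    exact Par.beta (hv.subst k hN) (ihA (k+1) (hN.lift 0) (hNp.lift 0))
      (ihV k hN hNp)

/-- Diamond property of parallel reduction. -/
lemma par_diamond {M A : PTm} (h1 : Par M A) :
    ∀ {B}, Par M B → ∃ C, Par A C ∧ Par B C := by
  induction h1 with
  | var n =>
    intro B h2; rw [par_var_inv h2]; exact ⟨var n, Par.refl _, Par.refl _⟩
  | @lam P P' h ih =>
    intro B h2
    rcases par_lam_inv h2 with ⟨B', rfl, hB⟩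
    rcases ih hB with ⟨C, hC1, hC2⟩
    exact ⟨lam C, Par.lam hC1, Par.lam hC2⟩
  | @oplus A A' B B' _ _ ih1 ih2 =>
    intro X h2
    rcases par_oplus_inv h2 with ⟨A₁, B₁, rfl, hA, hB⟩
    rcases ih1 hA with ⟨CA, c1, c2⟩
    rcases ih2 hB with ⟨CB, d1, d2⟩
    exact ⟨oplus CA CB, Par.oplus c1 d1, Par.oplus c2 d2⟩
  | @app P P' Q Q' hP hQ ihP ihQ =>
    intro B h2
    cases h2 with
    | app hP2 hQ2 =>
      rcases ihP hP2 with ⟨CP, c1, c2⟩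
      rcases ihQ hQ2 with ⟨CQ, d1, d2⟩
      exact ⟨app CP CQ, Par.app c1 d1, Par.app c2 d2⟩
    | @beta A₀ A₁ V V₁ hv hA hV =>
      -- P = lam A₀, Q = V
      rcases par_lam_inv hP with ⟨A₂, rfl, hA₂⟩
      rcases ihP (Par.lam hA) with ⟨CP, c1, c2⟩
      rcases par_lam_inv c2 with ⟨CA, rfl, hCA⟩
      rcases par_lam_inv c1 with ⟨CA', heq, hCA'⟩
      rcases ihQ hV with ⟨CV, d1, d2⟩
      refine ⟨CA.subst 0 CV, ?_, par_subst hCA 0 (par_value hV hv) d2⟩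
      cases heq
      exact Par.beta (par_value hQ hv) hCA' d1
  | @beta A₀ A₁ V V₁ hv hA hV ihA ihV =>
    intro B h2
    cases h2 with
    | app hP2 hQ2 =>
      rcases par_lam_inv hP2 with ⟨A₂, rfl, hA₂⟩
      rcases ihA hA₂ with ⟨CA, c1, c2⟩
      rcases ihV hQ2 with ⟨CV, d1, d2⟩
      refine ⟨CA.subst 0 CV, par_subst c1 0 (par_value hV hv) d1, ?_⟩
      exact Par.beta (par_value hQ2 hv) c2 d2
    | beta hv2 hA2 hV2 =>
      rcases ihA hA2 with ⟨CA, c1, c2⟩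
      rcases ihV hV2 with ⟨CV, d1, d2⟩
      exact ⟨CA.subst 0 CV, par_subst c1 0 (par_value hV hv) d1,
        par_subst c2 0 (par_value hV2 hv) d2⟩

/-! Star closure machinery. -/

abbrev FStar := Relation.ReflTransGen FullBv
abbrev WStar := Relation.ReflTransGen WeakBv
abbrev PStar := Relation.ReflTransGen Par

lemma FStar.lam {B B' : PTm} (h : FStar B B') : FStar (lam B) (lam B') :=
  Relation.ReflTransGen.lift _ (fun _ _ h => FullBv.lam h) _ _ h
lemma FStar.appL {P P' Q : PTm} (h : FStar P P') : FStar (app P Q) (app P' Q) :=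
  Relation.ReflTransGen.lift _ (fun _ _ h => FullBv.appL h) _ _ h
lemma FStar.appR {P Q Q' : PTm} (h : FStar Q Q') : FStar (app P Q) (app P Q') :=
  Relation.ReflTransGen.lift _ (fun _ _ h => FullBv.appR h) _ _ h
lemma FStar.oplusL {P P' Q : PTm} (h : FStar P P') : FStar (oplus P Q) (oplus P' Q) :=
  Relation.ReflTransGen.lift _ (fun _ _ h => FullBv.oplusL h) _ _ h
lemma FStar.oplusR {P Q Q' : PTm} (h : FStar Q Q') : FStar (oplus P Q) (oplus P Q') :=
  Relation.ReflTransGen.lift _ (fun _ _ h => FullBv.oplusR h) _ _ h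
lemma WStar.appL {P P' Q : PTm} (h : WStar P P') : WStar (app P Q) (app P' Q) :=
  Relation.ReflTransGen.lift _ (fun _ _ h => WeakBv.appL h) _ _ h
lemma WStar.appR {P Q Q' : PTm} (h : WStar Q Q') : WStar (app P Q) (app P Q') :=
  Relation.ReflTransGen.lift _ (fun _ _ h => WeakBv.appR h) _ _ h

lemma WStar.toFStar {M M' : PTm} (h : WStar M M') : FStar M M' :=
  Relation.ReflTransGen.lift id (fun _ _ (h : WeakBv _ _) => h.toFull) _ _ h

lemma Par.toFStar {M M' : PTm} (h : Par M M') : FStar M M' := by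
  induction h with
  | var n => exact Relation.ReflTransGen.refl
  | lam _ ih => exact ih.lam
  | app _ _ ih1 ih2 => exact (ih1.appL).trans (FStar.appR ih2)
  | oplus _ _ ih1 ih2 => exact (ih1.oplusL).trans (FStar.oplusR ih2)
  | @beta A A' V V' hv hA hV ihA ihV =>
    have h1 : FStar (PTm.app (PTm.lam A) V) (PTm.app (PTm.lam A') V') :=
      (FStar.appL (FStar.lam ihA)).trans (FStar.appR ihV)
    have hv' : IsValue V' := par_value hV hv
    exact h1.trans (Relation.ReflTransGen.single (FullBv.beta hv'))

lemma FStar.toPStar {M M' : PTm} (h : FStar M M') : PStar M M' :=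
  Relation.ReflTransGen.lift id (fun _ _ (h : FullBv _ _) => h.toPar) _ _ h

lemma PStar.toFStar {M M' : PTm} (h : PStar M M') : FStar M M' := by
  induction h with
  | refl => exact Relation.ReflTransGen.refl
  | tail _ h ih => exact ih.trans h.toFStar

/-- Strip lemma / confluence of parallel star. -/
lemma par_strip {M A B : PTm} (h1 : Par M A) (h2 : PStar M B) :
    ∃ C, PStar A C ∧ Par B C := by
  induction h2 generalizing A with
  | refl => exact ⟨A, Relation.ReflTransGen.refl, h1⟩
  | @tail X Y _ hXY ih =>
    rcases ih h1 with ⟨C, hC1, hC2⟩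
    rcases par_diamond hC2 hXY with ⟨D, hD1, hD2⟩
    exact ⟨D, hC1.tail hD1, hD2⟩

lemma pstar_confluent {M A B : PTm} (h1 : PStar M A) (h2 : PStar M B) :
    ∃ C, PStar A C ∧ PStar B C := by
  induction h1 with
  | refl => exact ⟨B, h2, Relation.ReflTransGen.refl⟩
  | @tail X Y _ hXY ih =>
    rcases ih with ⟨C, hC1, hC2⟩
    rcases par_strip hXY hC1 with ⟨D, hD1, hD2⟩
    exact ⟨D, hD1, hC2.tail hD2⟩

/-- A full-normal term is parallel-rigid. -/
lemma fullNf_par_eq {N X : PTm} (hn : FullNf N) (h : Par N X) : X = N := by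
  induction h with
  | var n => rfl
  | @lam B B' h ih =>
    have : FullNf B := fun s hs => hn _ (FullBv.lam hs)
    rw [ih this]
  | @app P P' Q Q' _ _ ih1 ih2 =>
    have h1 : FullNf P := fun s hs => hn _ (FullBv.appL hs)
    have h2 : FullNf Q := fun s hs => hn _ (FullBv.appR hs)
    rw [ih1 h1, ih2 h2]
  | @oplus A A' B B' _ _ ih1 ih2 =>
    have h1 : FullNf A := fun s hs => hn _ (FullBv.oplusL hs)
    have h2 : FullNf B := fun s hs => hn _ (FullBv.oplusR hs)
    rw [ih1 h1, ih2 h2]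
  | @beta A A' V V' hv _ _ _ _ =>
    exact absurd (FullBv.beta hv) (hn _)

lemma pstar_nf_eq {A C : PTm} (hA : FullNf A) (h : PStar A C) : C = A := by
  induction h with
  | refl => rfl
  | tail _ hbc ih => rw [ih] at hbc; exact fullNf_par_eq hA hbc

/-- Uniqueness of full normal forms w.r.t. parallel-star. -/
lemma pstar_nf_unique {M A B : PTm} (h1 : PStar M A) (h2 : PStar M B)
    (hA : FullNf A) (hB : FullNf B) : A = B := by
  rcases pstar_confluent h1 h2 with ⟨C, hC1, hC2⟩
  rw [← pstar_nf_eq hA hC1, pstar_nf_eq hB hC2]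

/-! ### Layer 4: internal parallel reduction and weak-first factorization -/

open PTm

/-- Internal parallel reduction: no contraction at weak positions; full parallel
reduction under `λ` and on the branches of a weak-position `⊕`. -/
inductive Pari : PTm → PTm → Prop
  | var (n : ℕ) : Pari (var n) (var n)
  | lam {B B'} : Par B B' → Pari (lam B) (lam B')
  | app {P P' Q Q'} : Pari P P' → Pari Q Q' → Pari (app P Q) (app P' Q')
  | oplus {A A' B B'} : Par A A' → Par B B' → Pari (oplus A B) (oplus A' B')

lemma Pari.toPar {M M' : PTm} (h : Pari M M') : Par M M' := by
  induction h with
  | var n => exact Par.var n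
  | lam h => exact Par.lam h
  | app _ _ ih1 ih2 => exact Par.app ih1 ih2
  | oplus h1 h2 => exact Par.oplus h1 h2

lemma Pari.refl (M : PTm) : Pari M M := by
  cases M with
  | var n => exact Pari.var n
  | lam B => exact Pari.lam (Par.refl B)
  | app P Q => exact Pari.app (Pari.refl P) (Pari.refl Q)
  | oplus A B => exact Pari.oplus (Par.refl A) (Par.refl B)

lemma pari_lam_inv {p : PTm} {A' : PTm} (h : Pari p (lam A')) :
    ∃ A, p = lam A ∧ Par A A' := by
  cases h with | lam h => exact ⟨_, rfl, h⟩

lemma pari_value_rev {q V' : PTm} (h : Pari q V') (hv : IsValue V') : IsValue q := by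
  cases h with
  | var n => exact IsValue.var n
  | lam _ => exact IsValue.lam _
  | app _ _ => cases hv
  | oplus _ _ => cases hv

lemma pari_value {q V' : PTm} (h : Pari q V') (hv : IsValue q) : IsValue V' := by
  cases h with
  | var n => exact IsValue.var n
  | lam _ => exact IsValue.lam _
  | app _ _ => cases hv
  | oplus _ _ => cases hv

lemma pari_lam_shape {p p' : PTm} (h : Pari p p') :
    (∃ A, p = lam A) ↔ (∃ A', p' = lam A') := by
  cases h with
  | var n => simp
  | lam _ => exact ⟨fun _ => ⟨_, rfl⟩, fun _ => ⟨_, rfl⟩⟩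
  | app _ _ => simp
  | oplus _ _ => simp

/-- `Pari` preserves weak normality in both directions. -/
lemma pari_wknf_iff {M M' : PTm} (h : Pari M M') : WkNf M ↔ WkNf M' := by
  induction h with
  | var n => exact ⟨fun _ => wknf_var n, fun _ => wknf_var n⟩
  | lam _ => exact ⟨fun _ => wknf_lam _, fun _ => wknf_lam _⟩
  | @app P P' Q Q' hP hQ ih1 ih2 =>
    rw [wknf_app_iff, wknf_app_iff, ih1, ih2, pari_lam_shape hP]
    constructor
    · rintro ⟨a, b, c⟩
      exact ⟨a, b, fun ⟨x, y⟩ => c ⟨x, pari_value_rev hQ y⟩⟩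
    · rintro ⟨a, b, c⟩
      exact ⟨a, b, fun ⟨x, y⟩ => c ⟨x, pari_value hQ y⟩⟩
  | oplus _ _ => exact ⟨fun _ => wknf_oplus _ _, fun _ => wknf_oplus _ _⟩

/-- `Pari` preserves surface normality in both directions. -/
lemma pari_surf_iff {M M' : PTm} (h : Pari M M') : SurfNormal M ↔ SurfNormal M' := by
  induction h with
  | var n => exact ⟨fun _ => surfNormal_var n, fun _ => surfNormal_var n⟩
  | lam _ => exact ⟨fun _ => surfNormal_lam _, fun _ => surfNormal_lam _⟩
  | @app P P' Q Q' hP hQ ih1 ih2 =>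
    rw [surfNormal_app_iff, surfNormal_app_iff, ih1, ih2, pari_lam_shape hP]
    constructor
    · rintro ⟨a, b, c⟩
      exact ⟨a, b, fun ⟨x, y⟩ => c ⟨x, pari_value_rev hQ y⟩⟩
    · rintro ⟨a, b, c⟩
      exact ⟨a, b, fun ⟨x, y⟩ => c ⟨x, pari_value hQ y⟩⟩
  | @oplus A A' B B' _ _ =>
    exact ⟨fun h => absurd h (not_surfNormal_oplus _ _),
           fun h => absurd h (not_surfNormal_oplus _ _)⟩

/-- Pull a weak step back through an internal parallel step. -/
lemma pari_weak_comm {M M' P' : PTm} (hi : Pari M M') (hw : WeakBv M' P') :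
    ∃ Y, WeakBv M Y ∧ Par Y P' := by
  induction hw generalizing M with
  | @beta A' V' hv' =>
    cases hi with
    | app hP hQ =>
      rcases pari_lam_inv hP with ⟨A, rfl, hA⟩
      have hqv : IsValue _ := pari_value_rev hQ hv'
      exact ⟨A.subst 0 _, WeakBv.beta hqv, par_subst hA 0 hqv hQ.toPar⟩
  | @appL X' Y' Q' hw ih =>
    cases hi with
    | app hP hQ =>
      rcases ih hP with ⟨Y₀, w, p⟩
      exact ⟨app Y₀ _, WeakBv.appL w, Par.app p hQ.toPar⟩
  | @appR X' Q' Q'' hw ih =>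
    cases hi with
    | app hP hQ =>
      rcases ih hQ with ⟨Y₀, w, p⟩
      exact ⟨app _ Y₀, WeakBv.appR w, Par.app hP.toPar p⟩

/-- Pull an `⊕`-step back through an internal parallel step. -/
lemma pari_oplus_comm {M M' P₁' P₂' : PTm} (hi : Pari M M')
    (ho : OplusRed M' P₁' P₂') :
    ∃ P₁ P₂, OplusRed M P₁ P₂ ∧ Par P₁ P₁' ∧ Par P₂ P₂' := by
  induction ho generalizing M with
  | root A' B' =>
    cases hi with
    | oplus h1 h2 => exact ⟨_, _, OplusRed.root _ _, h1, h2⟩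
  | @appL X' X₁' X₂' Q' ho ih =>
    cases hi with
    | app hP hQ =>
      rcases ih hP with ⟨P₁, P₂, h1, h2, h3⟩
      exact ⟨app P₁ _, app P₂ _, OplusRed.appL h1, Par.app h2 hQ.toPar,
        Par.app h3 hQ.toPar⟩
  | @appR X' Q' Q₁' Q₂' ho ih =>
    cases hi with
    | app hP hQ =>
      rcases ih hQ with ⟨P₁, P₂, h1, h2, h3⟩
      exact ⟨app _ P₁, app _ P₂, OplusRed.appR h1, Par.app hP.toPar h2,
        Par.app hP.toPar h3⟩

/-! #### Iterated substitution lists -/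

/-- `k`-fold lifting. -/
def liftK (k : ℕ) (V : PTm) : PTm := (PTm.lift 0)^[k] V

@[simp] lemma liftK_zero (V : PTm) : liftK 0 V = V := rfl
lemma liftK_succ (k : ℕ) (V : PTm) : liftK (k+1) V = PTm.lift 0 (liftK k V) :=
  Function.iterate_succ_apply' _ _ _

/-- Iterated substitution at depth `k` of a list of (lifted) terms. -/
def subL (k : ℕ) (A : PTm) (L : List PTm) : PTm :=
  L.foldl (fun t V => t.subst k (liftK k V)) A

@[simp] lemma subL_nil (k : ℕ) (A : PTm) : subL k A [] = A := rfl
lemma subL_cons (k : ℕ) (A V : PTm) (L : List PTm) :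
    subL k A (V :: L) = subL k (A.subst k (liftK k V)) L := rfl

lemma subL_app (k : ℕ) (P Q : PTm) (L : List PTm) :
    subL k (app P Q) L = app (subL k P L) (subL k Q L) := by
  induction L generalizing P Q with
  | nil => rfl
  | cons V L ih => simp only [subL_cons, PTm.subst]; exact ih _ _

lemma subL_oplus (k : ℕ) (P Q : PTm) (L : List PTm) :
    subL k (oplus P Q) L = oplus (subL k P L) (subL k Q L) := by
  induction L generalizing P Q with
  | nil => rfl
  | cons V L ih => simp only [subL_cons, PTm.subst]; exact ih _ _

lemma subL_lam (k : ℕ) (B : PTm) (L : List PTm) :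
    subL k (lam B) L = lam (subL (k+1) B L) := by
  induction L generalizing B with
  | nil => rfl
  | cons V L ih =>
    simp only [subL_cons, PTm.subst, ← liftK_succ]
    exact ih _

lemma liftK_value {V : PTm} (h : IsValue V) (k : ℕ) : IsValue (liftK k V) := by
  induction k with
  | zero => exact h
  | succ k ih => rw [liftK_succ]; exact ih.lift 0

lemma subL_value {W : PTm} (hW : IsValue W) {L : List PTm}
    (hL : ∀ V ∈ L, IsValue V) (k : ℕ) : IsValue (subL k W L) := by
  induction L generalizing W with
  | nil => exact hW
  | cons V L ih =>
    rw [subL_cons]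
    exact ih (hW.subst k (liftK_value (hL V (by simp)) k))
      (fun V hv => hL V (by simp [hv]))

lemma liftK_par {V V' : PTm} (h : Par V V') (k : ℕ) :
    Par (liftK k V) (liftK k V') := by
  induction k with
  | zero => exact h
  | succ k ih => rw [liftK_succ, liftK_succ]; exact ih.lift 0

/-- Pointwise relation on substitution lists. -/
def LRel (L L' : List PTm) : Prop :=
  List.Forall₂ (fun V V' => IsValue V ∧ Par V V') L L'

lemma LRel.values {L L' : List PTm} (h : LRel L L') : ∀ V ∈ L, IsValue V := by
  induction h with
  | nil => simp
  | cons h _ ih =>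
    intro V hv
    rcases List.mem_cons.1 hv with rfl | hv
    · exact h.1
    · exact ih V hv

/-- Parallel reduction through iterated substitutions. -/
lemma subL_par {X X' : PTm} (hX : Par X X') {L L' : List PTm} (hL : LRel L L')
    (k : ℕ) : Par (subL k X L) (subL k X' L') := by
  induction hL generalizing X X' with
  | nil => exact hX
  | cons h _ ih =>
    rw [subL_cons, subL_cons]
    exact ih (par_subst hX k (liftK_value h.1 k) (liftK_par h.2 k))

/-- Key commutation: β at the head followed by a substitution list. -/
lemma subL_subst_comm (L : List PTm) (B W : PTm) :
    (subL 1 B L).subst 0 (subL 0 W L) = subL 0 (B.subst 0 W) L := by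
  induction L generalizing B W with
  | nil => rfl
  | cons V L ih =>
    simp only [subL_cons, liftK_zero]
    rw [ih]
    congr 1
    rw [liftK_succ, liftK_zero, subst_subst B 0 0 W V (le_refl 0)]

/-- Values resolve internally through substitution lists. -/
lemma pari_subL_value {L L' : List PTm} (hL : LRel L L') :
    ∀ {V V' : PTm}, IsValue V → Par V V' → Pari (subL 0 V L) (subL 0 V' L') := by
  induction hL with
  | nil =>
    intro V V' hv hp
    cases hv with
    | var n => rw [par_var_inv hp]; exact Pari.var n
    | lam B =>
      rcases par_lam_inv hp with ⟨B', rfl, hB⟩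
      exact Pari.lam hB
  | @cons W W' L₀ L₀' hW hL₀ ih =>
    intro V V' hv hp
    cases hv with
    | var n =>
      rw [par_var_inv hp]
      cases n with
      | zero =>
        have e : (var 0).subst 0 (liftK 0 W) = W := by simp [PTm.subst]
        have e' : (var 0).subst 0 (liftK 0 W') = W' := by simp [PTm.subst]
        rw [subL_cons, subL_cons, e, e']
        exact ih hW.1 hW.2
      | succ n =>
        have e : ∀ Z, (var (n+1)).subst 0 (liftK 0 Z) = var n := by
          intro Z; simp [PTm.subst]
        rw [subL_cons, subL_cons, e, e]
        exact ih (IsValue.var n) (Par.var n)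
    | lam B =>
      rcases par_lam_inv hp with ⟨B', rfl, hB⟩
      rw [subL_lam, subL_lam]
      exact Pari.lam (subL_par hB (List.Forall₂.cons hW hL₀) 1)

/-- Weak-first factorization of a parallel step, through a substitution list. -/
lemma wfact_sub {A A' : PTm} (h : Par A A') :
    ∀ {L L' : List PTm}, LRel L L' →
      ∃ M₀, WStar (subL 0 A L) M₀ ∧ Pari M₀ (subL 0 A' L') := by
  induction h with
  | var n =>
    intro L L' hL
    exact ⟨_, Relation.ReflTransGen.refl, pari_subL_value hL (IsValue.var n) (Par.var n)⟩
  | @lam B B' hB ih =>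
    intro L L' hL
    rw [subL_lam, subL_lam]
    exact ⟨_, Relation.ReflTransGen.refl, Pari.lam (subL_par hB hL 1)⟩
  | @app P P' Q Q' hP hQ ihP ihQ =>
    intro L L' hL
    rcases ihP hL with ⟨M₁, w1, i1⟩
    rcases ihQ hL with ⟨M₂, w2, i2⟩
    rw [subL_app, subL_app]
    exact ⟨app M₁ M₂, (WStar.appL w1).trans (WStar.appR w2), Pari.app i1 i2⟩
  | @oplus A₀ A₀' B₀ B₀' hA hB ihA ihB =>
    intro L L' hL
    rw [subL_oplus, subL_oplus]
    exact ⟨_, Relation.ReflTransGen.refl,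
      Pari.oplus (subL_par hA hL 0) (subL_par hB hL 0)⟩
  | @beta B B' W W' hv hB hW ihB =>
    intro L L' hL
    have hWv : IsValue (subL 0 W L) := subL_value hv hL.values 0
    rcases ihB (List.Forall₂.cons ⟨hv, hW⟩ hL) with ⟨M₀, w, i⟩
    refine ⟨M₀, ?_, ?_⟩
    · rw [subL_app, subL_lam]
      refine Relation.ReflTransGen.head (WeakBv.beta hWv) ?_
      rw [subL_subst_comm]
      have : subL 0 (B.subst 0 W) L = subL 0 B (W :: L) := by
        rw [subL_cons]; rfl
      rw [this]
      exact w
    · have : subL 0 (B'.subst 0 W') L' = subL 0 B' (W' :: L') := by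
        rw [subL_cons]; rfl
      rw [this]
      exact i

/-- Weak-first factorization of a parallel step. -/
lemma wfact_par {M M' : PTm} (h : Par M M') :
    ∃ M₀, WStar M M₀ ∧ Pari M₀ M' := by
  have := wfact_sub h (L := []) (L' := []) List.Forall₂.nil
  simpa using this

/-! ### Layer 5: uniform normalization of the unbiased strategy -/

open PTm

/-- Weak reduction sequences of a given length. -/
inductive WIter : ℕ → PTm → PTm → Prop
  | zero (M : PTm) : WIter 0 M M
  | succ {k M X K} : WeakBv M X → WIter k X K → WIter (k+1) M K

lemma WIter.toWStar {k : ℕ} {M K : PTm} (h : WIter k M K) : WStar M K := by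
  induction h with
  | zero M => exact Relation.ReflTransGen.refl
  | succ h _ ih => exact Relation.ReflTransGen.head h ih

lemma WStar.toWIter {M K : PTm} (h : WStar M K) : ∃ k, WIter k M K := by
  induction h with
  | refl => exact ⟨0, WIter.zero M⟩
  | tail _ h ih =>
    rcases ih with ⟨k, hk⟩
    clear * - h hk
    induction hk with
    | zero M => exact ⟨1, WIter.succ h (WIter.zero _)⟩
    | succ h0 _ ih =>
      rcases ih h with ⟨k', hk'⟩
      exact ⟨k'+1, WIter.succ h0 hk'⟩

/-- Weak projection: lengths of weak reductions to a weak normal form only shrink. -/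
lemma weak_proj : ∀ k {M K B : PTm}, WIter k M K → WkNf K → WeakBv M B →
    ∃ k' < k, WIter k' B K := by
  intro k
  induction k with
  | zero =>
    intro M K B h hK hB
    cases h with | zero => exact absurd hB (hK _)
  | succ k ih =>
    intro M K B h hK hB
    cases h with
    | succ h1 h2 =>
      rcases weak_diamond h1 hB with rfl | ⟨C, hC1, hC2⟩
      · exact ⟨k, Nat.lt_succ_self k, h2⟩
      · rcases ih h2 hK hC1 with ⟨k', hk', h3⟩
        exact ⟨k'+1, Nat.succ_lt_succ hk', WIter.succ hC2 h3⟩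

/-- Accessibility under the unbiased strategy: all `⊳βv`-sequences terminate. -/
def UNacc (M : PTm) : Prop := Acc (fun a b => UnbBv b a) M

lemma wknf_of_witer_zeroish {M K : PTm} (h : WIter 0 M K) : M = K := by
  cases h; rfl

/-- During the weak phase, accessibility transfers backwards. -/
lemma wacc : ∀ k {M K : PTm}, WIter k M K → WkNf K → UNacc K → UNacc M := by
  intro k
  induction k using Nat.strong_induction_on with
  | _ k ih =>
    intro M K hMK hK hKacc
    cases hMK with
    | zero => exact hKacc
    | succ h1 h2 =>
      constructor
      intro Y hY
      have hweak : WeakBv M Y := by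
        cases hY with
        | weak hw => exact hw
        | lam hnw _ => exact absurd h1 (hnw _)
        | appL hnw _ => exact absurd h1 (hnw _)
        | appR hnw _ => exact absurd h1 (hnw _)
        | oplusL hnw _ => exact absurd h1 (hnw _)
        | oplusR hnw _ => exact absurd h1 (hnw _)
      rcases weak_proj _ (WIter.succ h1 h2) hK hweak with ⟨k'', hk'', h3⟩
      exact ih k'' hk'' h3 hK hKacc

/-- Weak-phase extraction along a parallel reduction to a weakly normal term. -/
lemma wt1 : ∀ k {M M' K' : PTm}, Par M M' → WIter k M' K' → WkNf K' →
    ∃ e K, WIter e M K ∧ WkNf K ∧ Par K K' := by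
  intro k
  induction k with
  | zero =>
    intro M M' K' hp hiter hK'
    have := wknf_of_witer_zeroish hiter
    subst this
    rcases wfact_par hp with ⟨M₀, hw, hi⟩
    rcases hw.toWIter with ⟨e, he⟩
    exact ⟨e, M₀, he, (pari_wknf_iff hi).2 hK', hi.toPar⟩
  | succ k ih =>
    intro M M' K' hp hiter hK'
    cases hiter with
    | @succ _ _ X _ h1 h2 =>
      rcases wfact_par hp with ⟨M₀, hw, hi⟩
      rcases pari_weak_comm hi h1 with ⟨Y, hY1, hY2⟩
      rcases ih hY2 h2 hK' with ⟨e', K, h3, h4, h5⟩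
      rcases WStar.toWIter (hw.tail hY1) with ⟨e0, he0⟩
      rcases WStar.toWIter (he0.toWStar.trans h3.toWStar) with ⟨e, he⟩
      exact ⟨e, K, he, h4, h5⟩

/-- Weak-phase extraction along a parallel-star reduction to a weakly normal term. -/
lemma wtstar {M N : PTm} (h : PStar M N) (hN : WkNf N) :
    ∃ e K, WIter e M K ∧ WkNf K ∧ PStar K N := by
  induction h using Relation.ReflTransGen.head_induction_on with
  | refl => exact ⟨0, _, WIter.zero _, hN, Relation.ReflTransGen.refl⟩
  | @head M M₁ h1 h2 ih =>
    rcases ih with ⟨e₁, K₁, iter₁, wk₁, ps₁⟩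
    rcases wt1 e₁ h1 iter₁ wk₁ with ⟨e, K, iterM, wkK, hKK₁⟩
    exact ⟨e, K, iterM, wkK, Relation.ReflTransGen.head hKK₁ ps₁⟩

lemma wknf_pres_par {M M' : PTm} (h : Par M M') (hn : WkNf M) : WkNf M' := by
  have := h.toFStar
  clear h
  induction this with
  | refl => exact hn
  | tail _ h ih => exact ih.pres h

lemma wknf_pres_pstar {M M' : PTm} (h : PStar M M') (hn : WkNf M) : WkNf M' := by
  induction h with
  | refl => exact hn
  | tail _ h ih => exact wknf_pres_par h ih

lemma par_app_wknf_inv {P Q Z : PTm} (hn : WkNf (app P Q)) (h : Par (app P Q) Z) :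
    ∃ P' Q', Z = app P' Q' ∧ Par P P' ∧ Par Q Q' := by
  cases h with
  | app h1 h2 => exact ⟨_, _, rfl, h1, h2⟩
  | beta hv h1 h2 => exact absurd (WeakBv.beta hv) (hn _)

lemma pstar_app_wknf {P Q N : PTm} (hn : WkNf (app P Q)) (h : PStar (app P Q) N) :
    ∃ NP NQ, N = app NP NQ ∧ PStar P NP ∧ PStar Q NQ := by
  induction h with
  | refl => exact ⟨P, Q, rfl, Relation.ReflTransGen.refl, Relation.ReflTransGen.refl⟩
  | @tail mid Z hprev hlast ih =>
    rcases ih with ⟨NP, NQ, rfl, h1, h2⟩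
    have hmid : WkNf (app NP NQ) := wknf_pres_pstar hprev hn
    rcases par_app_wknf_inv hmid hlast with ⟨P', Q', rfl, h3, h4⟩
    exact ⟨P', Q', rfl, h1.tail h3, h2.tail h4⟩

lemma pstar_lam_inv {B N : PTm} (h : PStar (lam B) N) :
    ∃ NB, N = lam NB ∧ PStar B NB := by
  induction h with
  | refl => exact ⟨B, rfl, Relation.ReflTransGen.refl⟩
  | @tail mid Z hprev hlast ih =>
    rcases ih with ⟨NB, rfl, h1⟩
    rcases par_lam_inv hlast with ⟨NB', rfl, h2⟩
    exact ⟨NB', rfl, h1.tail h2⟩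

lemma pstar_oplus_inv {A B N : PTm} (h : PStar (oplus A B) N) :
    ∃ NA NB, N = oplus NA NB ∧ PStar A NA ∧ PStar B NB := by
  induction h with
  | refl => exact ⟨A, B, rfl, Relation.ReflTransGen.refl, Relation.ReflTransGen.refl⟩
  | @tail mid Z hprev hlast ih =>
    rcases ih with ⟨NA, NB, rfl, h1, h2⟩
    rcases par_oplus_inv hlast with ⟨NA', NB', rfl, h3, h4⟩
    exact ⟨NA', NB', rfl, h1.tail h3, h2.tail h4⟩

/-! #### Accessibility lifts through the frozen skeleton -/

lemma acc_var (n : ℕ) : UNacc (var n) := by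
  constructor
  intro X hX
  cases hX with
  | weak hw => cases hw

lemma acc_lam {B : PTm} (h : UNacc B) : UNacc (lam B) := by
  induction h with
  | intro B hB ih =>
    constructor
    intro X hX
    cases hX with
    | weak hw => cases hw
    | lam _ h => exact ih _ h

lemma acc_oplus {A : PTm} (hA : UNacc A) : ∀ {B : PTm}, UNacc B → UNacc (oplus A B) := by
  induction hA with
  | intro A hAacc ihA =>
    intro B hB
    induction hB with
    | intro B hBacc ihB =>
      constructor
      intro X hX
      cases hX with
      | weak hw => cases hw
      | oplusL _ h => exact ihA _ h (Acc.intro B hBacc)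
      | oplusR _ h => exact ihB _ h

lemma acc_app {P : PTm} (hP : UNacc P) : ∀ {Q : PTm}, UNacc Q → WkNf P → WkNf Q →
    ¬((∃ A, P = lam A) ∧ IsValue Q) → UNacc (app P Q) := by
  induction hP with
  | intro P hPacc ihP =>
    intro Q hQ
    induction hQ with
    | intro Q hQacc ihQ =>
      intro h1 h2 h3
      constructor
      intro X hX
      cases hX with
      | weak hw => exact absurd hw (wknf_app_iff.2 ⟨h1, h2, h3⟩ _)
      | @appL _ P' _ _ h =>
        refine ihP _ h (Acc.intro Q hQacc) (h1.pres h.toFull) h2 ?_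
        rintro ⟨hl, hv⟩
        exact h3 ⟨(shape_pres h1 h.toFull).1 hl, hv⟩
      | @appR _ _ Q' _ h =>
        refine ihQ _ h h1 (h2.pres h.toFull) ?_
        rintro ⟨hl, hv⟩
        exact h3 ⟨hl, (shape_pres h2 h.toFull).2 hv⟩

/-- Main uniform-normalization lemma: any term parallel-reducing to a full normal
form is accessible for the unbiased strategy. -/
lemma un_main : ∀ n (N : PTm), sizeOf N ≤ n → FullNf N → ∀ M, PStar M N → UNacc M := by
  intro n
  induction n with
  | zero => intro N hN; cases N <;> simp at hN
  | succ n ih =>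
    intro N hN hNnf M hMN
    have hNwk : WkNf N := fun s hs => hNnf _ hs.toFull
    rcases wtstar hMN hNwk with ⟨e, K, iter, wkK, psK⟩
    refine wacc e iter wkK ?_
    cases K with
    | var m => exact acc_var m
    | lam B =>
      rcases pstar_lam_inv psK with ⟨NB, rfl, hB⟩
      have : FullNf NB := fun s hs => hNnf _ (FullBv.lam hs)
      have hsz : sizeOf NB ≤ n := by
        simp only [PTm.lam.sizeOf_spec] at hN; omega
      exact acc_lam (ih NB hsz this B hB)
    | app P Q =>
      rcases wknf_app_iff.1 wkK with ⟨wP, wQ, hsh⟩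
      rcases pstar_app_wknf wkK psK with ⟨NP, NQ, rfl, h1, h2⟩
      have nf1 : FullNf NP := fun s hs => hNnf _ (FullBv.appL hs)
      have nf2 : FullNf NQ := fun s hs => hNnf _ (FullBv.appR hs)
      have hsz : sizeOf NP ≤ n ∧ sizeOf NQ ≤ n := by
        simp only [PTm.app.sizeOf_spec] at hN; omega
      exact acc_app (ih NP hsz.1 nf1 P h1) (ih NQ hsz.2 nf2 Q h2) wP wQ hsh
    | oplus A B =>
      rcases pstar_oplus_inv psK with ⟨NA, NB, rfl, h1, h2⟩
      have nf1 : FullNf NA := fun s hs => hNnf _ (FullBv.oplusL hs)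
      have nf2 : FullNf NB := fun s hs => hNnf _ (FullBv.oplusR hs)
      have hsz : sizeOf NA ≤ n ∧ sizeOf NB ≤ n := by
        simp only [PTm.oplus.sizeOf_spec] at hN; omega
      exact acc_oplus (ih NA hsz.1 nf1 A h1) (ih NB hsz.2 nf2 B h2)

/-- If `M` fully reduces to a full normal form, every unbiased sequence from `M`
terminates. -/
lemma un_of_reach {M N : PTm} (h : FStar M N) (hN : FullNf N) : UNacc M :=
  un_main (sizeOf N) N le_rfl hN M h.toPStar

lemma fullNf_of_no_unb {M : PTm} (h : ∀ X, ¬ UnbBv M X) : FullNf M :=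
  fun s hs => by rcases unb_total hs with ⟨X, hX⟩; exact h X hX

/-- Termination of pointwise unbiased sequences. -/
lemma acc_seq : ∀ {M : PTm}, UNacc M → ∀ g : ℕ → PTm, g 0 = M →
    (∀ j, TmNormal (g j) ∨ UnbBv (g j) (g (j+1))) → ∃ j, TmNormal (g j) := by
  intro M hM
  induction hM with
  | intro M hMacc ih =>
    intro g hg0 hs
    rcases hs 0 with h | h
    · exact ⟨0, h⟩
    · rcases ih _ (by rw [← hg0]; exact h) (fun j => g (j+1)) rfl (fun j => hs (j+1)) with
        ⟨j, hj⟩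
      exact ⟨j+1, hj⟩

/-! ### Layer 6: standard approximation trees and their value -/

open PTm
open scoped ENNReal NNReal

/-- Standard approximation trees: `SAV N n M s` means `M` can reach the normal form
`N` with probability at least `s`, by a *standard* reduction tree of size `≤ n`:
surface steps anywhere, deep steps only on surface-normal terms. -/
inductive SAV (N : PTm) : ℕ → PTm → NNReal → Prop
  | zero (M : PTm) : SAV N 0 M 0
  | base : SAV N 0 N 1
  | sbeta {n M M' s} : WeakBv M M' → SAV N n M' s → SAV N (n+1) M s
  | splus {n₁ n₂ M M₁ M₂ s₁ s₂} : OplusRed M M₁ M₂ → SAV N n₁ M₁ s₁ →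
      SAV N n₂ M₂ s₂ → SAV N (n₁+n₂+1) M (s₁/2 + s₂/2)
  | deep {n M M' s} : SurfNormal M → FullBv M M' → SAV N n M' s → SAV N (n+1) M s

lemma sav_le_one {N : PTm} : ∀ {n M s}, SAV N n M s → s ≤ 1 := by
  intro n M s h
  induction h with
  | zero M => exact zero_le_one
  | base => exact le_rfl
  | sbeta _ _ ih => exact ih
  | splus _ _ _ ih1 ih2 =>
    calc _ ≤ (1 : NNReal)/2 + 1/2 := by gcongr
    _ = 1 := by rw [← add_div]; norm_num
  | deep _ _ _ ih => exact ih

section Transport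

variable {N : PTm} (hN : TmNormal N)

/-- Transport of a standard tree over a weak surface step. -/
lemma sav_tbeta (hN : TmNormal N) : ∀ n, ∀ {M s P}, SAV N n M s → WeakBv M P →
    ∃ n' s', SAV N n' P s' ∧ s ≤ s' ∧ n' ≤ n ∧ (s ≠ 0 → n' < n) := by
  intro n
  induction n using Nat.strong_induction_on with
  | _ n ih =>
    intro M s P hT hw
    cases hT with
    | zero => exact ⟨0, 0, SAV.zero P, le_rfl, le_rfl, fun h => absurd rfl h⟩
    | base => exact absurd (Step.bv hw.toFull) (hN _)
    | @sbeta n₁ _ M' _ hw' T1 =>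
      rcases weak_diamond hw' hw with rfl | ⟨C, hC1, hC2⟩
      · exact ⟨n₁, s, T1, le_rfl, Nat.le_succ n₁, fun _ => Nat.lt_succ_self n₁⟩
      · rcases ih n₁ (Nat.lt_succ_self n₁) T1 hC1 with ⟨a, s', T', hs, ha, hstr⟩
        exact ⟨a+1, s', SAV.sbeta hC2 T', hs, Nat.succ_le_succ ha,
          fun h0 => Nat.succ_lt_succ (hstr h0)⟩
    | @splus n₁ n₂ _ M₁ M₂ s₁ s₂ ho T1 T2 =>
      rcases weak_oplus_comm hw ho with ⟨P₁, P₂, ho', hw1, hw2⟩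
      rcases ih n₁ (by omega) T1 hw1 with ⟨a₁, s₁', U1, hs1, ha1, hst1⟩
      rcases ih n₂ (by omega) T2 hw2 with ⟨a₂, s₂', U2, hs2, ha2, hst2⟩
      refine ⟨a₁+a₂+1, s₁'/2 + s₂'/2, SAV.splus ho' U1 U2, by gcongr, by omega, ?_⟩
      intro hs0
      have : s₁ ≠ 0 ∨ s₂ ≠ 0 := by
        by_contra hc
        push_neg at hc
        exact hs0 (by simp [hc.1, hc.2])
      rcases this with h | h
      · have := hst1 h; omega
      · have := hst2 h; omega
    | deep hsn _ _ => exact absurd hw (hsn.wknf _)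

/-- Transport of a standard tree over a surface `⊕`-step. -/
lemma sav_tplus (hN : TmNormal N) : ∀ n, ∀ {M s P Q}, SAV N n M s → OplusRed M P Q →
    ∃ a b s₁ s₂, SAV N a P s₁ ∧ SAV N b Q s₂ ∧ s ≤ s₁/2 + s₂/2 ∧
      a ≤ n ∧ b ≤ n ∧ (s ≠ 0 → a < n ∧ b < n) := by
  intro n
  induction n using Nat.strong_induction_on with
  | _ n ih =>
    intro M s P Q hT ho
    cases hT with
    | zero =>
      exact ⟨0, 0, 0, 0, SAV.zero P, SAV.zero Q, by simp, le_rfl, le_rfl,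
        fun h => absurd rfl h⟩
    | base => exact absurd (Step.oplus ho) (hN _)
    | @sbeta n₁ _ M' _ hw' T1 =>
      rcases weak_oplus_comm hw' ho with ⟨X₁, X₂, ho', hw1, hw2⟩
      rcases ih n₁ (Nat.lt_succ_self n₁) T1 ho' with
        ⟨a, b, s₁, s₂, U1, U2, hs, ha, hb, hst⟩
      refine ⟨a+1, b+1, s₁, s₂, SAV.sbeta hw1 U1, SAV.sbeta hw2 U2, hs, by omega,
        by omega, ?_⟩
      intro hs0
      rcases hst hs0 with ⟨h1, h2⟩
      omega
    | @splus n₁ n₂ _ M₁ M₂ s₁ s₂ ho' T1 T2 =>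
      rcases oplus_oplus ho' ho with ⟨rfl, rfl⟩ |
        ⟨C11, C12, C21, C22, u1, u2, u3, u4⟩
      · exact ⟨n₁, n₂, s₁, s₂, T1, T2, le_rfl, by omega, by omega,
          fun _ => ⟨by omega, by omega⟩⟩
      · rcases ih n₁ (by omega) T1 u1 with ⟨a₁, b₁, u₁, v₁, A1, B1, hs1, ha1, hb1, hst1⟩
        rcases ih n₂ (by omega) T2 u2 with ⟨a₂, b₂, u₂, v₂, A2, B2, hs2, ha2, hb2, hst2⟩
        refine ⟨a₁+a₂+1, b₁+b₂+1, u₁/2 + u₂/2, v₁/2 + v₂/2,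
          SAV.splus u3 A1 A2, SAV.splus u4 B1 B2, ?_, by omega, by omega, ?_⟩
        swap
        · intro hs0
          have hor : s₁ ≠ 0 ∨ s₂ ≠ 0 := by
            by_contra hc
            push_neg at hc
            exact hs0 (by simp [hc.1, hc.2])
          rcases hor with h | h
          · rcases hst1 h with ⟨x1, x2⟩; exact ⟨by omega, by omega⟩
          · rcases hst2 h with ⟨x1, x2⟩; exact ⟨by omega, by omega⟩
        calc s₁/2 + s₂/2 ≤ (u₁/2 + v₁/2)/2 + (u₂/2 + v₂/2)/2 := by gcongr
        _ = (u₁/2 + u₂/2)/2 + (v₁/2 + v₂/2)/2 := by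
            simp only [div_eq_mul_inv, add_mul]; ring
    | deep hsn _ _ => exact absurd (SStep.oplus ho) (hsn _)

/-- Absorption of a weak-star prefix. -/
lemma sav_absorb_wstar {N M M₀ : PTm} (h : WStar M M₀) {n s} (hT : SAV N n M₀ s) :
    ∃ n', SAV N n' M s := by
  induction h using Relation.ReflTransGen.head_induction_on with
  | refl => exact ⟨n, hT⟩
  | head h1 _ ih =>
    rcases ih with ⟨a, hA⟩
    exact ⟨a+1, SAV.sbeta h1 hA⟩

/-- Absorption of a chain of deep steps on surface-normal terms. -/
lemma sav_absorb_snchain {N M M' : PTm} (hsn : SurfNormal M) (h : FStar M M')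
    {n s} (hT : SAV N n M' s) : ∃ n', SAV N n' M s := by
  induction h using Relation.ReflTransGen.head_induction_on with
  | refl => exact ⟨n, hT⟩
  | @head X Y h1 h2 ih =>
    rcases ih (hsn.pres h1) with ⟨a, hA⟩
    exact ⟨a+1, SAV.deep hsn h1 hA⟩

/-- Left absorption of a parallel step into a standard tree. -/
lemma sav_absorb_par {N : PTm} (hN : TmNormal N) : ∀ n, ∀ {M M' s}, Par M M' →
    SAV N n M' s → ∃ n', SAV N n' M s := by
  intro n
  induction n using Nat.strong_induction_on with
  | _ n ih =>
    intro M M' s hp hT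
    by_cases hsn : SurfNormal M
    · exact sav_absorb_snchain hsn hp.toFStar hT
    · cases hT with
      | zero => exact ⟨0, SAV.zero M⟩
      | base =>
        rcases wfact_par hp with ⟨M₀, hw, hi⟩
        have hsn0 : SurfNormal M₀ := (pari_surf_iff hi).2 hN.surf
        rcases sav_absorb_snchain hsn0 hi.toPar.toFStar (SAV.base (N := N)) with ⟨a, hA⟩
        exact sav_absorb_wstar hw hA
      | @deep n₀ _ M'' _ hs' hf T =>
        rcases wfact_par hp with ⟨M₀, hw, hi⟩
        have hsn0 : SurfNormal M₀ := (pari_surf_iff hi).2 hs'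
        rcases sav_absorb_snchain hsn0 hi.toPar.toFStar (SAV.deep hs' hf T) with ⟨a, hA⟩
        exact sav_absorb_wstar hw hA
      | @sbeta n₀ _ P' _ hw' T =>
        rcases wfact_par hp with ⟨M₀, hw, hi⟩
        rcases pari_weak_comm hi hw' with ⟨Y, hY1, hY2⟩
        rcases ih n₀ (Nat.lt_succ_self n₀) hY2 T with ⟨a, hA⟩
        exact sav_absorb_wstar hw (SAV.sbeta hY1 hA)
      | @splus n₁ n₂ _ P₁ P₂ s₁ s₂ ho T1 T2 =>
        rcases wfact_par hp with ⟨M₀, hw, hi⟩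
        rcases pari_oplus_comm hi ho with ⟨Q₁, Q₂, ho', hq1, hq2⟩
        rcases ih n₁ (by omega) hq1 T1 with ⟨a, hA⟩
        rcases ih n₂ (by omega) hq2 T2 with ⟨b, hB⟩
        exact sav_absorb_wstar hw (SAV.splus ho' hA hB)

end Transport

/-- The standard value of `M` towards the normal form `N`. -/
noncomputable def sv (N M : PTm) : ℝ≥0∞ :=
  ⨆ s : {s : NNReal // ∃ n, SAV N n M s}, (s.1 : ℝ≥0∞)

instance sv_nonempty (N M : PTm) : Nonempty {s : NNReal // ∃ n, SAV N n M s} :=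
  ⟨⟨0, 0, SAV.zero M⟩⟩

lemma sv_le_one (N M : PTm) : sv N M ≤ 1 := by
  refine iSup_le fun ⟨s, n, h⟩ => ?_
  exact_mod_cast sav_le_one h

lemma le_sv {N M : PTm} {n s} (h : SAV N n M s) : (s : ℝ≥0∞) ≤ sv N M :=
  le_iSup (fun x : {s : NNReal // ∃ n, SAV N n M s} => (x.1 : ℝ≥0∞)) ⟨s, n, h⟩

lemma sv_base (N : PTm) : 1 ≤ sv N N := by
  exact_mod_cast le_sv (SAV.base (N := N))

/-- `sv` does not decrease towards sources of full steps. -/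
lemma sv_step_bv {N M M' : PTm} (hN : TmNormal N) (h : FullBv M M') :
    sv N M' ≤ sv N M := by
  refine iSup_le fun ⟨s, n, hT⟩ => ?_
  rcases sav_absorb_par hN n h.toPar hT with ⟨n', hT'⟩
  exact le_sv hT'

/-- `sv` does not decrease towards sources of `⊕`-steps. -/
lemma sv_step_oplus {N M M₁ M₂ : PTm} (h : OplusRed M M₁ M₂) :
    sv N M₁ / 2 + sv N M₂ / 2 ≤ sv N M := by
  have h1 : sv N M₁ / 2 = ⨆ s : {s : NNReal // ∃ n, SAV N n M₁ s}, (s.1 : ℝ≥0∞)/2 := by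
    rw [sv, ENNReal.iSup_div]
  have h2 : sv N M₂ / 2 = ⨆ s : {s : NNReal // ∃ n, SAV N n M₂ s}, (s.1 : ℝ≥0∞)/2 := by
    rw [sv, ENNReal.iSup_div]
  rw [h1, h2]
  refine ENNReal.iSup_add_iSup_le ?_
  rintro ⟨s₁, n₁, h1⟩ ⟨s₂, n₂, h2⟩
  calc (s₁ : ℝ≥0∞)/2 + (s₂ : ℝ≥0∞)/2 = ((s₁/2 + s₂/2 : NNReal) : ℝ≥0∞) := by
        push_cast [ENNReal.coe_div]
        norm_num
  _ ≤ sv N M := le_sv (SAV.splus h h1 h2)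

/-! ### Layer 7: multidistributions, lifted steps, and the key bound -/

open PTm
open scoped ENNReal NNReal

/-! #### scale / mass / obsN algebra -/

@[simp] lemma scale_zero (p : NNReal) : scale p 0 = 0 := rfl
@[simp] lemma scale_cons (p q : NNReal) (M : PTm) (m : MDist) :
    scale p ((q, M) ::ₘ m) = (p * q, M) ::ₘ scale p m := by
  simp [scale]
@[simp] lemma scale_add (p : NNReal) (a b : MDist) :
    scale p (a + b) = scale p a + scale p b := by
  simp [scale]
lemma scale_single (p : NNReal) (M : PTm) : scale p (single M) = {(p, M)} := by
  simp [scale, single]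

/-- Total mass of a multidistribution. -/
def mass (m : MDist) : NNReal := (m.map Prod.fst).sum

@[simp] lemma mass_zero : mass 0 = 0 := rfl
@[simp] lemma mass_cons (p : NNReal) (M : PTm) (m : MDist) :
    mass ((p, M) ::ₘ m) = p + mass m := by simp [mass]
@[simp] lemma mass_add (a b : MDist) : mass (a + b) = mass a + mass b := by
  simp [mass]
@[simp] lemma mass_scale (p : NNReal) (m : MDist) :
    mass (scale p m) = p * mass m := by
  simp only [mass, scale, Multiset.map_map]
  rw [← Multiset.sum_map_mul_left]
  rfl

lemma obsN_pos {N : PTm} (hN : TmNormal N) (m : MDist) :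
    obsN m N = ((m.filter fun q => q.2 = N).map Prod.fst).sum := by
  simp only [obsN]
  exact if_pos hN

lemma obsN_neg {N : PTm} (hN : ¬ TmNormal N) (m : MDist) : obsN m N = 0 := by
  simp only [obsN]
  exact if_neg hN

@[simp] lemma obsN_zero (N : PTm) : obsN 0 N = 0 := by
  by_cases hN : TmNormal N
  · rw [obsN_pos hN]; simp
  · rw [obsN_neg hN]

lemma obsN_cons (p : NNReal) (M : PTm) (m : MDist) {N : PTm} (hN : TmNormal N) :
    obsN ((p, M) ::ₘ m) N = (if M = N then p else 0) + obsN m N := by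
  rw [obsN_pos hN, obsN_pos hN, Multiset.filter_cons]
  by_cases h : M = N
  · simp [h]
  · simp [h]

lemma obsN_add (a b : MDist) (N : PTm) : obsN (a + b) N = obsN a N + obsN b N := by
  by_cases hN : TmNormal N
  · rw [obsN_pos hN, obsN_pos hN, obsN_pos hN, Multiset.filter_add]
    simp
  · rw [obsN_neg hN, obsN_neg hN, obsN_neg hN]; simp

lemma obsN_scale (p : NNReal) (m : MDist) (N : PTm) :
    obsN (scale p m) N = p * obsN m N := by
  by_cases hN : TmNormal N
  · induction m using Multiset.induction_on with
    | empty => simp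
    | cons q m ih =>
      obtain ⟨r, M⟩ := q
      rw [scale_cons, obsN_cons _ _ _ hN, obsN_cons _ _ _ hN, ih, mul_add]
      congr 1
      by_cases h : M = N <;> simp [h, mul_comm]
  · rw [obsN_neg hN, obsN_neg hN]; simp

lemma obsN_singleton (p : NNReal) (M N : PTm) (hN : TmNormal N) :
    obsN {(p, M)} N = if M = N then p else 0 := by
  have : ({(p, M)} : MDist) = (p, M) ::ₘ 0 := rfl
  rw [this, obsN_cons _ _ _ hN, obsN_zero, add_zero]

lemma obsN_le_mass (m : MDist) (N : PTm) : obsN m N ≤ mass m := by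
  by_cases hN : TmNormal N
  · induction m using Multiset.induction_on with
    | empty => simp
    | cons q m ih =>
      obtain ⟨r, P⟩ := q
      rw [obsN_cons _ _ _ hN, mass_cons]
      refine add_le_add ?_ ih
      by_cases h : P = N <;> simp [h]
  · rw [obsN_neg hN]; exact zero_le ..

/-! #### Lift / FullLift basics -/

lemma FullLift.toLift {r : PTm → MDist → Prop} {m n : MDist} (h : FullLift r m n) :
    Lift r m n := by
  induction h with
  | zero => exact Lift.zero
  | keep _ _ ih => exact Lift.keep ih
  | step hr _ ih => exact Lift.step hr ih

lemma Lift.mono {r r' : PTm → MDist → Prop} (hrr : ∀ M d, r M d → r' M d)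
    {m n : MDist} (h : Lift r m n) : Lift r' m n := by
  induction h with
  | zero => exact Lift.zero
  | keep _ ih => exact Lift.keep ih
  | step hr _ ih => exact Lift.step (hrr _ _ hr) ih

lemma eLift_toStepLift {m n : MDist} (h : FullLift EStep m n) : Lift Step m n :=
  h.toLift.mono fun _ _ he => he.toStep

lemma Lift.refl (r : PTm → MDist → Prop) (m : MDist) : Lift r m m := by
  induction m using Multiset.induction_on with
  | empty => exact Lift.zero
  | cons q m ih => exact Lift.keep ih

/-- Mass of the target of a one-step reduction. -/
lemma step_mass {M : PTm} {d : MDist} (h : Step M d) : mass d = 1 := by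
  cases h with
  | bv _ => simp [single, mass]
  | oplus _ =>
    show mass ((1/2, _) ::ₘ (1/2, _) ::ₘ 0) = 1
    rw [mass_cons, mass_cons, mass_zero, add_zero, ← add_div]
    norm_num

lemma lift_step_mass {m n : MDist} (h : Lift Step m n) : mass n = mass m := by
  induction h with
  | zero => rfl
  | keep _ ih => simp [ih]
  | step hr _ ih => simp [ih, step_mass hr]

/-- `obsN` is monotone along lifted steps. -/
lemma obsN_mono_lift {m n : MDist} (h : Lift Step m n) (N : PTm) :
    obsN m N ≤ obsN n N := by
  classical
  by_cases hN : TmNormal N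
  · induction h with
    | zero => exact le_rfl
    | keep ih ih2 => rw [obsN_cons _ _ _ hN, obsN_cons _ _ _ hN]; exact add_le_add_right ih2 _
    | @step p M d m' n' hr _ ih =>
      rw [obsN_cons _ _ _ hN, obsN_add]
      have hM : (if M = N then p else 0) = 0 := by
        by_cases h : M = N
        · subst h; exact absurd hr (hN _)
        · simp [h]
      rw [hM, zero_add]
      exact le_add_of_nonneg_of_le (zero_le ..) ih
  · simp [obsN_neg hN]

/-- Totality of the full lifting of `⊳E`. -/
lemma eLift_total (m : MDist) : ∃ n, FullLift EStep m n := by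
  induction m using Multiset.induction_on with
  | empty => exact ⟨0, FullLift.zero⟩
  | cons q m ih =>
    obtain ⟨p, M⟩ := q
    rcases ih with ⟨n, hn⟩
    by_cases hM : TmNormal M
    · exact ⟨_, FullLift.keep hM hn⟩
    · rcases estep_total hM with ⟨e, he⟩
      exact ⟨_, FullLift.step he hn⟩

lemma fullLift_zero_inv {r : PTm → MDist → Prop} {n : MDist}
    (h : FullLift r 0 n) : n = 0 := by
  have key : ∀ {m n : MDist}, FullLift r m n → m = 0 → n = 0 := by
    intro m n h
    induction h with
    | zero => intro; rfl
    | keep _ _ => intro h0; exact absurd h0 (by simp)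
    | step _ _ => intro h0; exact absurd h0 (by simp)
  exact key h rfl

/-- Inversion of a full lift on a singleton. -/
lemma fullLift_singleton_inv {r : PTm → MDist → Prop} {p : NNReal} {M : PTm}
    {x : MDist} (h : FullLift r {(p, M)} x) :
    (TmNormal M ∧ x = {(p, M)}) ∨ (∃ d, r M d ∧ x = scale p d) := by
  have key : ∀ {m0 x : MDist}, FullLift r m0 x → m0 = {(p, M)} →
      (TmNormal M ∧ x = {(p, M)}) ∨ (∃ d, r M d ∧ x = scale p d) := by
    intro m0 x h
    induction h with
    | zero => intro h0; exact absurd h0 (by simp)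
    | @keep p' M' m' n' hnorm h2 ih =>
      intro h0
      have hc := congrArg Multiset.card h0
      simp at hc
      subst hc
      have hn' : n' = 0 := fullLift_zero_inv h2
      subst hn'
      rw [Multiset.cons_zero, Multiset.singleton_inj] at h0
      obtain ⟨h1, h2'⟩ := Prod.mk.injEq _ _ _ _ ▸ h0
      subst h1; subst h2'
      exact Or.inl ⟨hnorm, rfl⟩
    | @step p' M' d m' n' hr h2 ih =>
      intro h0
      have hc := congrArg Multiset.card h0
      simp at hc
      subst hc
      have hn' : n' = 0 := fullLift_zero_inv h2
      subst hn'
      rw [Multiset.cons_zero, Multiset.singleton_inj] at h0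
      obtain ⟨h1, h2'⟩ := Prod.mk.injEq _ _ _ _ ▸ h0
      subst h1; subst h2'
      exact Or.inr ⟨d, hr, by rw [add_zero]⟩
  exact key h rfl

/-- Decomposition of a full lift across a sum. -/
lemma fullLift_decompose {r : PTm → MDist → Prop} :
    ∀ {m a b c : MDist}, m = a + b → FullLift r m c →
      ∃ ca cb, c = ca + cb ∧ FullLift r a ca ∧ FullLift r b cb := by
  intro m a b c hm h
  induction h generalizing a b with
  | zero =>
    have hc := congrArg Multiset.card hm
    simp only [Multiset.card_zero, Multiset.card_add] at hc
    have ha : a = 0 := Multiset.card_eq_zero.1 (by omega)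
    have hb : b = 0 := Multiset.card_eq_zero.1 (by omega)
    subst ha; subst hb
    exact ⟨0, 0, by simp, FullLift.zero, FullLift.zero⟩
  | @keep p M m' n' hnorm h2 ih =>
    have hmem : (p, M) ∈ a + b := by rw [← hm]; simp
    rcases Multiset.mem_add.1 hmem with hmem | hmem
    · rcases Multiset.exists_cons_of_mem hmem with ⟨a', rfl⟩
      have hm' : m' = a' + b := by
        have h3 : (p, M) ::ₘ m' = (p, M) ::ₘ (a' + b) := by
          rw [hm, Multiset.cons_add]
        exact (Multiset.cons_inj_right _).1 h3
      rcases ih hm' with ⟨ca, cb, rfl, h3, h4⟩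
      exact ⟨(p, M) ::ₘ ca, cb, by rw [Multiset.cons_add], FullLift.keep hnorm h3, h4⟩
    · rcases Multiset.exists_cons_of_mem hmem with ⟨b', rfl⟩
      have hm' : m' = a + b' := by
        have h3 : (p, M) ::ₘ m' = (p, M) ::ₘ (a + b') := by
          rw [hm, add_comm a ((p, M) ::ₘ b'), Multiset.cons_add, add_comm b' a]
        exact (Multiset.cons_inj_right _).1 h3
      rcases ih hm' with ⟨ca, cb, rfl, h3, h4⟩
      refine ⟨ca, (p, M) ::ₘ cb, ?_, h3, FullLift.keep hnorm h4⟩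
      rw [← Multiset.singleton_add, ← Multiset.singleton_add]
      exact add_left_comm _ _ _
  | @step p M d m' n' hr h2 ih =>
    have hmem : (p, M) ∈ a + b := by rw [← hm]; simp
    rcases Multiset.mem_add.1 hmem with hmem | hmem
    · rcases Multiset.exists_cons_of_mem hmem with ⟨a', rfl⟩
      have hm' : m' = a' + b := by
        have h3 : (p, M) ::ₘ m' = (p, M) ::ₘ (a' + b) := by
          rw [hm, Multiset.cons_add]
        exact (Multiset.cons_inj_right _).1 h3
      rcases ih hm' with ⟨ca, cb, rfl, h3, h4⟩
      exact ⟨scale p d + ca, cb, by rw [add_assoc], FullLift.step hr h3, h4⟩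
    · rcases Multiset.exists_cons_of_mem hmem with ⟨b', rfl⟩
      have hm' : m' = a + b' := by
        have h3 : (p, M) ::ₘ m' = (p, M) ::ₘ (a + b') := by
          rw [hm, add_comm a ((p, M) ::ₘ b'), Multiset.cons_add, add_comm b' a]
        exact (Multiset.cons_inj_right _).1 h3
      rcases ih hm' with ⟨ca, cb, rfl, h3, h4⟩
      refine ⟨ca, scale p d + cb, ?_, h3, FullLift.step hr h4⟩
      exact add_left_comm _ _ _

/-! ### Layer 8: evaluation sequences and the key bound -/

open PTm
open scoped ENNReal NNReal

lemma coe_half : ((1/2 : NNReal) : ℝ≥0∞) = 1/2 := by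
  rw [ENNReal.coe_div (by norm_num : (2:NNReal) ≠ 0)]
  norm_num

/-- A pure `⇉E`-step sequence. -/
def EPS (f : ℕ → MDist) : Prop := ∀ i, FullLift EStep (f i) (f (i + 1))

lemma EPS.tail {f : ℕ → MDist} (h : EPS f) : EPS fun j => f (j + 1) :=
  fun i => h (i + 1)

lemma obsN_mono_eps {f : ℕ → MDist} (h : EPS f) (N : PTm) :
    Monotone fun j => (obsN (f j) N : ℝ≥0∞) := by
  refine monotone_nat_of_le_succ fun j => ?_
  exact_mod_cast obsN_mono_lift (eLift_toStepLift (h j)) N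

lemma iSup_tail_le (u : ℕ → ℝ≥0∞) : (⨆ j, u (j + 1)) ≤ ⨆ j, u j :=
  iSup_le fun j => le_iSup u (j + 1)

lemma iSup_add_eq {u v : ℕ → ℝ≥0∞} (hu : Monotone u) (hv : Monotone v) :
    (⨆ j, (u j + v j)) = (⨆ j, u j) + ⨆ j, v j :=
  (ENNReal.iSup_add_iSup fun i j =>
    ⟨max i j, add_le_add (hu (le_max_left i j)) (hv (le_max_right i j))⟩).symm

/-- Decomposition of an evaluation sequence along a sum. -/
lemma eps_decompose {f : ℕ → MDist} (hf : EPS f) {a b : MDist} (h0 : f 0 = a + b) :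
    ∃ fa fb : ℕ → MDist, fa 0 = a ∧ fb 0 = b ∧ EPS fa ∧ EPS fb ∧
      ∀ j, f j = fa j + fb j := by
  classical
  have step : ∀ j (x y : MDist), f j = x + y →
      ∃ xy : MDist × MDist, f (j+1) = xy.1 + xy.2 ∧
        FullLift EStep x xy.1 ∧ FullLift EStep y xy.2 := by
    intro j x y hxy
    rcases fullLift_decompose hxy (hf j) with ⟨ca, cb, h1, h2, h3⟩
    exact ⟨(ca, cb), h1, h2, h3⟩
  let G : ∀ j : ℕ, {xy : MDist × MDist // f j = xy.1 + xy.2} := fun j =>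
    Nat.rec ⟨(a, b), h0⟩
      (fun j prev =>
        ⟨Classical.choose (step j prev.1.1 prev.1.2 prev.2),
         (Classical.choose_spec (step j prev.1.1 prev.1.2 prev.2)).1⟩) j
  refine ⟨fun j => (G j).1.1, fun j => (G j).1.2, rfl, rfl, ?_, ?_, fun j => (G j).2⟩
  · intro j
    exact (Classical.choose_spec (step j (G j).1.1 (G j).1.2 (G j).2)).2.1
  · intro j
    exact (Classical.choose_spec (step j (G j).1.1 (G j).1.2 (G j).2)).2.2

/-- Deep phase: on a surface-normal term reaching the normal form `N`, every
evaluation sequence hits `N`. -/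
lemma deep_phase {p : NNReal} {N : PTm} (hNnf : FullNf N) :
    ∀ {M : PTm}, UNacc M → SurfNormal M → PStar M N →
      ∀ f, EPS f → f 0 = {(p, M)} → ∃ j, f j = {(p, N)} := by
  intro M hacc
  induction hacc with
  | intro M hMacc ih =>
    intro hsn hMN f hf h0
    by_cases hnorm : TmNormal M
    · have hNM : N = M := pstar_nf_eq hnorm.fullNf hMN
      exact ⟨0, by rw [h0, hNM]⟩
    · have h1 := hf 0
      rw [h0] at h1
      rcases fullLift_singleton_inv h1 with ⟨hNn, _⟩ | ⟨d, hd, hx⟩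
      · exact absurd hNn hnorm
      · cases hd with
        | surf hns _ => exact absurd hsn hns
        | @unb M' hsn2 hu =>
          rcases par_strip (UnbBv.toFull hu).toPar hMN with ⟨C, hC1, hC2⟩
          have hC : C = N := fullNf_par_eq hNnf hC2
          subst hC
          have h0' : f 1 = {(p, M')} := by rw [hx, scale_single]
          rcases ih _ hu (hsn.pres hu.toFull) hC1 (fun j => f (j+1)) hf.tail h0'
            with ⟨j, hj⟩
          exact ⟨j+1, hj⟩

/-- Within a standard tree, a nonzero value at a surface-normal root gives full
reachability of `N`. -/
lemma sav_deep_chain {N : PTm} : ∀ {n M s}, SAV N n M s → SurfNormal M → s ≠ 0 →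
    FStar M N := by
  intro n M s h
  induction h with
  | zero => intro _ h; exact absurd rfl h
  | base => intro _ _; exact Relation.ReflTransGen.refl
  | sbeta hw _ _ => intro hsn _; exact absurd hw (hsn.wknf _)
  | splus ho _ _ _ _ => intro hsn _; exact absurd (SStep.oplus ho) (hsn _)
  | deep hsn' hfb _ ih =>
    intro _ hs
    exact Relation.ReflTransGen.head hfb (ih (hsn'.pres hfb) hs)

lemma oplus_scale_eq (p : NNReal) (M₁ M₂ : PTm) :
    scale p ({((1 : NNReal) / 2, M₁), ((1 : NNReal) / 2, M₂)} : MDist) =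
      {(p * (1/2), M₁)} + {(p * (1/2), M₂)} := by
  show scale p ((1/2, M₁) ::ₘ (1/2, M₂) ::ₘ 0) = _
  rw [scale_cons, scale_cons, scale_zero, ← Multiset.singleton_add,
    ← Multiset.singleton_add]
  rfl

/-- The master bound: a standard tree value is dominated by the limit of any
evaluation sequence. -/
lemma star_sv {N : PTm} (hN : TmNormal N) : ∀ n, ∀ {M : PTm} {s : NNReal},
    SAV N n M s → ∀ (p : NNReal) (f : ℕ → MDist), EPS f → f 0 = {(p, M)} →
      (p : ℝ≥0∞) * s ≤ ⨆ j, (obsN (f j) N : ℝ≥0∞) := by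
  intro n
  induction n using Nat.strong_induction_on with
  | _ n ih =>
    intro M s hT p f hf h0
    by_cases hs0 : s = 0
    · simp [hs0]
    have hs1 : (s : ℝ≥0∞) ≤ 1 := by exact_mod_cast sav_le_one hT
    have hps : (p : ℝ≥0∞) * s ≤ p := by
      calc (p : ℝ≥0∞) * s ≤ p * 1 := by gcongr
      _ = p := mul_one _
    by_cases hMN : M = N
    · have he : (obsN (f 0) N : ℝ≥0∞) = p := by
        rw [h0, obsN_singleton _ _ _ hN, if_pos hMN]
      calc (p : ℝ≥0∞) * s ≤ p := hps
      _ = _ := he.symm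
      _ ≤ _ := le_iSup (fun j => (obsN (f j) N : ℝ≥0∞)) 0
    by_cases hsn : SurfNormal M
    · have hreach := sav_deep_chain hT hsn hs0
      have hacc : UNacc M := un_of_reach hreach hN.fullNf
      rcases deep_phase hN.fullNf hacc hsn hreach.toPStar f hf h0 with ⟨j, hj⟩
      have he : (obsN (f j) N : ℝ≥0∞) = p := by
        rw [hj, obsN_singleton _ _ _ hN, if_pos rfl]
      calc (p : ℝ≥0∞) * s ≤ p := hps
      _ = _ := he.symm
      _ ≤ _ := le_iSup (fun j => (obsN (f j) N : ℝ≥0∞)) j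
    · have hnotnorm : ¬ TmNormal M := fun h => hsn h.surf
      have h1 := hf 0
      rw [h0] at h1
      rcases fullLift_singleton_inv h1 with ⟨hn, _⟩ | ⟨d, hd, hx⟩
      · exact absurd hn hnotnorm
      cases hd with
      | unb hsn' _ => exact absurd hsn' hsn
      | surf _ hss =>
        cases hss with
        | @bv P hw =>
          rcases sav_tbeta hN n hT hw with ⟨n', s', T', hss', _, hstrict⟩
          have h0' : f 1 = {(p, P)} := by rw [hx, scale_single]
          have hrec := ih n' (hstrict hs0) T' p (fun j => f (j+1)) hf.tail h0'
          calc (p : ℝ≥0∞) * s ≤ p * s' :=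
                mul_le_mul_right (by exact_mod_cast hss' : (s : ℝ≥0∞) ≤ s') _
          _ ≤ ⨆ j, (obsN (f (j+1)) N : ℝ≥0∞) := hrec
          _ ≤ _ := iSup_tail_le _
        | @oplus M₁ M₂ ho =>
          rcases sav_tplus hN n hT ho with ⟨a, b, s₁, s₂, T1, T2, hsle, _, _, hstrict⟩
          obtain ⟨ha, hb⟩ := hstrict hs0
          have hsplit : f 1 = {(p * (1/2), M₁)} + {(p * (1/2), M₂)} := by
            rw [hx, oplus_scale_eq]
          rcases eps_decompose hf.tail hsplit with ⟨fa, fb, ha0, hb0, hfa, hfb, hsum⟩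
          have r1 := ih a ha T1 (p * (1/2)) fa hfa ha0
          have r2 := ih b hb T2 (p * (1/2)) fb hfb hb0
          have hmono_a := obsN_mono_eps hfa N
          have hmono_b := obsN_mono_eps hfb N
          have hsum_sup : (⨆ j, (obsN (f (j+1)) N : ℝ≥0∞)) =
              (⨆ j, (obsN (fa j) N : ℝ≥0∞)) + ⨆ j, (obsN (fb j) N : ℝ≥0∞) := by
            rw [← iSup_add_eq hmono_a hmono_b]
            congr 1
            funext j
            rw [hsum j, obsN_add]
            push_cast
            ring
          have key : (p : ℝ≥0∞) * s ≤
              (⨆ j, (obsN (fa j) N : ℝ≥0∞)) + ⨆ j, (obsN (fb j) N : ℝ≥0∞) := by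
            calc (p : ℝ≥0∞) * s ≤ (p : ℝ≥0∞) * ((s₁ : ℝ≥0∞)/2 + (s₂ : ℝ≥0∞)/2) := by
                  refine mul_le_mul_right ?_ _
                  calc (s : ℝ≥0∞) ≤ ((s₁/2 + s₂/2 : NNReal) : ℝ≥0∞) := by
                        exact_mod_cast hsle
                  _ = (s₁ : ℝ≥0∞)/2 + (s₂ : ℝ≥0∞)/2 := by
                        push_cast [ENNReal.coe_div]
                        norm_num
            _ = ((p * (1/2) : NNReal) : ℝ≥0∞) * s₁ +
                ((p * (1/2) : NNReal) : ℝ≥0∞) * s₂ := by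
                  push_cast
                  simp only [div_eq_mul_inv, one_div]
                  ring
            _ ≤ _ := add_le_add r1 r2
          calc (p : ℝ≥0∞) * s ≤ _ := key
          _ = ⨆ j, (obsN (f (j+1)) N : ℝ≥0∞) := hsum_sup.symm
          _ ≤ _ := iSup_tail_le _

/-! #### The standard value of a multidistribution -/

noncomputable def svS (N : PTm) (m : MDist) : ℝ≥0∞ :=
  (m.map fun q => (q.1 : ℝ≥0∞) * sv N q.2).sum

@[simp] lemma svS_zero (N : PTm) : svS N 0 = 0 := rfl
@[simp] lemma svS_cons (N : PTm) (p : NNReal) (M : PTm) (m : MDist) :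
    svS N ((p, M) ::ₘ m) = (p : ℝ≥0∞) * sv N M + svS N m := by
  simp [svS]
@[simp] lemma svS_add (N : PTm) (a b : MDist) :
    svS N (a + b) = svS N a + svS N b := by
  simp [svS]

lemma obsN_le_svS {N : PTm} (hN : TmNormal N) (m : MDist) :
    (obsN m N : ℝ≥0∞) ≤ svS N m := by
  induction m using Multiset.induction_on with
  | empty => simp
  | cons q m ih =>
    obtain ⟨p, P⟩ := q
    rw [obsN_cons _ _ _ hN, svS_cons]
    push_cast
    refine add_le_add ?_ ih
    by_cases h : P = N
    · simp only [if_pos h]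
      calc (p : ℝ≥0∞) = p * 1 := (mul_one _).symm
      _ ≤ p * sv N P := mul_le_mul_right (by rw [h]; exact sv_base N) _
    · simp [h]

lemma svS_scale_step {N : PTm} (hN : TmNormal N) {M : PTm} {d : MDist}
    (h : Step M d) (p : NNReal) : svS N (scale p d) ≤ (p : ℝ≥0∞) * sv N M := by
  cases h with
  | @bv M' hb =>
    rw [scale_single]
    show svS N ((p, M') ::ₘ 0) ≤ _
    rw [svS_cons, svS_zero, add_zero]
    exact mul_le_mul_right (sv_step_bv hN hb) _
  | @oplus M₁ M₂ ho =>
    rw [oplus_scale_eq, svS_add]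
    have e1 : svS N {(p * (1/2), M₁)} = ((p * (1/2) : NNReal) : ℝ≥0∞) * sv N M₁ := by
      show svS N ((p * (1/2), M₁) ::ₘ 0) = _
      rw [svS_cons, svS_zero, add_zero]
    have e2 : svS N {(p * (1/2), M₂)} = ((p * (1/2) : NNReal) : ℝ≥0∞) * sv N M₂ := by
      show svS N ((p * (1/2), M₂) ::ₘ 0) = _
      rw [svS_cons, svS_zero, add_zero]
    rw [e1, e2]
    calc ((p * (1/2) : NNReal) : ℝ≥0∞) * sv N M₁ +
        ((p * (1/2) : NNReal) : ℝ≥0∞) * sv N M₂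
        = (p : ℝ≥0∞) * (sv N M₁ / 2 + sv N M₂ / 2) := by
          push_cast
          simp only [div_eq_mul_inv, one_div]
          ring
    _ ≤ (p : ℝ≥0∞) * sv N M := mul_le_mul_right (sv_step_oplus ho) _

lemma svS_mono_step {N : PTm} (hN : TmNormal N) {m n : MDist}
    (h : Lift Step m n) : svS N n ≤ svS N m := by
  induction h with
  | zero => exact le_rfl
  | keep _ ih => rw [svS_cons, svS_cons]; exact add_le_add_right ih _
  | @step p M d m' n' hr _ ih =>
    rw [svS_cons, svS_add]
    exact add_le_add (svS_scale_step hN hr p) ih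

lemma svS_mono_reach {N : PTm} (hN : TmNormal N) {m n : MDist}
    (h : Relation.ReflTransGen (Lift Step) m n) : svS N n ≤ svS N m := by
  induction h with
  | refl => exact le_rfl
  | tail _ h ih => exact (svS_mono_step hN h).trans ih

/-- The standard value of a multidistribution is dominated by the limit of any
evaluation sequence from it. -/
lemma svS_le_sup {N : PTm} (hN : TmNormal N) :
    ∀ (m : MDist) (f : ℕ → MDist), EPS f → f 0 = m →
      svS N m ≤ ⨆ j, (obsN (f j) N : ℝ≥0∞) := by
  intro m
  induction m using Multiset.induction_on with
  | empty => intro f _ _; simp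
  | cons q m ih =>
    obtain ⟨p, P⟩ := q
    intro f hf h0
    have h0' : f 0 = {(p, P)} + m := by rw [h0, Multiset.singleton_add]
    rcases eps_decompose hf h0' with ⟨fa, fb, ha0, hb0, hfa, hfb, hsum⟩
    have r1 : (p : ℝ≥0∞) * sv N P ≤ ⨆ j, (obsN (fa j) N : ℝ≥0∞) := by
      rw [sv, ENNReal.mul_iSup]
      refine iSup_le ?_
      rintro ⟨s, ns, hs⟩
      exact star_sv hN ns hs p fa hfa ha0
    have r2 := ih fb hfb hb0
    have hsum_sup : (⨆ j, (obsN (f j) N : ℝ≥0∞)) =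
        (⨆ j, (obsN (fa j) N : ℝ≥0∞)) + ⨆ j, (obsN (fb j) N : ℝ≥0∞) := by
      rw [← iSup_add_eq (obsN_mono_eps hfa N) (obsN_mono_eps hfb N)]
      congr 1
      funext j
      rw [hsum j, obsN_add]
      push_cast
      ring
    rw [svS_cons, hsum_sup]
    exact add_le_add r1 r2

/-- The key theorem: any reachable observation is dominated by the limit of any
evaluation sequence. -/
lemma key_star {N : PTm} {m n : MDist} {f : ℕ → MDist}
    (hreach : Relation.ReflTransGen (Lift Step) m n) (hf : EPS f) (h0 : f 0 = m) :
    (obsN n N : ℝ≥0∞) ≤ ⨆ j, (obsN (f j) N : ℝ≥0∞) := by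
  by_cases hN : TmNormal N
  · calc (obsN n N : ℝ≥0∞) ≤ svS N n := obsN_le_svS hN n
    _ ≤ svS N m := svS_mono_reach hN hreach
    _ ≤ _ := svS_le_sup hN m f hf h0
  · rw [obsN_neg hN]
    simp

open PTm
open scoped ENNReal NNReal

noncomputable def nextE (m : MDist) : MDist := Classical.choose (eLift_total m)

lemma nextE_spec (m : MDist) : FullLift EStep m (nextE m) :=
  Classical.choose_spec (eLift_total m)

noncomputable def canonSeq (m : MDist) (j : ℕ) : MDist := nextE^[j] m

lemma canonSeq_zero (m : MDist) : canonSeq m 0 = m := rfl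

lemma canonSeq_eps (m : MDist) : EPS (canonSeq m) := by
  intro i
  show FullLift EStep (nextE^[i] m) (nextE^[i+1] m)
  rw [Function.iterate_succ_apply']
  exact nextE_spec _

lemma eps_reach {m : MDist} {f : ℕ → MDist} (hf : EPS f) (h0 : f 0 = m) :
    ∀ j, Relation.ReflTransGen (Lift Step) m (f j) := by
  intro j
  induction j with
  | zero => rw [h0]
  | succ j ih => exact ih.tail (eLift_toStepLift (hf j))

lemma mseq_reach {m : MDist} {f : ℕ → MDist} (hf : MSeq (Lift Step) m f) :
    ∀ j, Relation.ReflTransGen (Lift Step) m (f j) := by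
  intro j
  induction j with
  | zero => rw [hf.1]
  | succ j ih =>
    rcases hf.2 j with h | ⟨_, h⟩
    · exact ih.tail h
    · rw [h]; exact ih

lemma mseq_eps {m : MDist} {f : ℕ → MDist} (hf : MSeq (FullLift EStep) m f) :
    f 0 = m ∧ EPS f := by
  refine ⟨hf.1, fun i => ?_⟩
  rcases hf.2 i with h | ⟨hnorm, _⟩
  · exact h
  · rcases eLift_total (f i) with ⟨n, hn⟩
    exact absurd hn (hnorm n)

lemma reach_mass {m n : MDist} (h : Relation.ReflTransGen (Lift Step) m n) :
    mass n = mass m := by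
  induction h with
  | refl => rfl
  | tail _ h ih => rw [lift_step_mass h, ih]

/-- **Asymptotic normalization for the probabilistic Call-by-Value λ-calculus**:
for every multi-distribution `m`, the set `Lim(m, ⇒)` of limits of `⇒`-sequences from
`m` has a greatest element `⟦m⟧`; `m ⇉E⇓ p` iff `p = ⟦m⟧`; in particular every
`⇉E`-sequence from `m` has limit `⟦m⟧`, i.e. the full unbiased evaluation `⇉E` is an
asymptotically normalizing strategy for `⇒` with respect to `obsN`. -/
theorem prob_cbv_asymptotic_normalization (m : MDist) (hm : IsMDist m) :
    ∃ g : PTm → NNReal,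
      IsGreatest {p | MConv (Lift Step) m p} g ∧
      (∀ p, MConv (FullLift EStep) m p ↔ p = g) ∧
      (∀ f, MSeq (FullLift EStep) m f → IsLUB (Set.range fun i => obsN (f i)) g) := by
  classical
  set f₀ := canonSeq m with hf₀def
  have hf₀ : EPS f₀ := canonSeq_eps m
  have hmassle : mass m ≤ 1 := hm.2
  have hbound : ∀ j N, (obsN (f₀ j) N : ℝ≥0∞) ≤ 1 := by
    intro j N
    have h1 : obsN (f₀ j) N ≤ mass (f₀ j) := obsN_le_mass _ _
    have h2 : mass (f₀ j) = mass m := reach_mass (eps_reach hf₀ rfl j)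
    have : obsN (f₀ j) N ≤ 1 := by
      calc obsN (f₀ j) N ≤ mass (f₀ j) := h1
      _ = mass m := h2
      _ ≤ 1 := hmassle
    exact_mod_cast this
  set gE : PTm → ℝ≥0∞ := fun N => ⨆ j, (obsN (f₀ j) N : ℝ≥0∞) with hgEdef
  have hgE_le : ∀ N, gE N ≤ 1 := fun N => iSup_le fun j => hbound j N
  set g : PTm → NNReal := fun N => (gE N).toNNReal with hgdef
  have hg_coe : ∀ N, (g N : ℝ≥0∞) = gE N := by
    intro N
    exact ENNReal.coe_toNNReal (lt_of_le_of_lt (hgE_le N) ENNReal.one_lt_top).ne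
  have hKey : ∀ f, EPS f → f 0 = m → ∀ N,
      (⨆ j, (obsN (f j) N : ℝ≥0∞)) = gE N := by
    intro f hf h0 N
    apply le_antisymm
    · exact iSup_le fun j => key_star (eps_reach hf h0 j) hf₀ rfl
    · exact iSup_le fun j => key_star (eps_reach hf₀ rfl j) hf h0
  have hUB : ∀ n, Relation.ReflTransGen (Lift Step) m n → ∀ N,
      (obsN n N : ℝ≥0∞) ≤ gE N := fun n hr N => key_star hr hf₀ rfl
  have bridge : ∀ u : ℕ → MDist, (∀ N, (⨆ j, (obsN (u j) N : ℝ≥0∞)) = gE N) →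
      IsLUB (Set.range fun i => obsN (u i)) g := by
    intro u hu
    constructor
    · rintro x ⟨i, rfl⟩
      intro N
      have h1 : (obsN (u i) N : ℝ≥0∞) ≤ gE N := by
        rw [← hu N]
        exact le_iSup (fun j => (obsN (u j) N : ℝ≥0∞)) i
      rw [← hg_coe N] at h1
      exact_mod_cast h1
    · intro q hq
      intro N
      have h1 : gE N ≤ (q N : ℝ≥0∞) := by
        rw [← hu N]
        refine iSup_le fun i => ?_
        have : obsN (u i) N ≤ q N := hq ⟨i, rfl⟩ N
        exact_mod_cast this
      rw [← hg_coe N] at h1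
      exact_mod_cast h1
  refine ⟨g, ⟨⟨f₀, ⟨rfl, fun i => Or.inl (eLift_toStepLift (hf₀ i))⟩,
      bridge f₀ (hKey f₀ hf₀ rfl)⟩, ?_⟩, ?_, ?_⟩
  · rintro p ⟨f, hseq, hlub⟩
    refine hlub.2 ?_
    rintro x ⟨i, rfl⟩
    intro N
    have h1 := hUB _ (mseq_reach hseq i) N
    rw [← hg_coe N] at h1
    exact_mod_cast h1
  · intro p
    constructor
    · rintro ⟨f, hseq, hlub⟩
      obtain ⟨h0, heps⟩ := mseq_eps hseq
      exact hlub.unique (bridge f (hKey f heps h0))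
    · rintro rfl
      exact ⟨f₀, ⟨rfl, fun i => Or.inl (hf₀ i)⟩, bridge f₀ (hKey f₀ hf₀ rfl)⟩
  · intro f hf
    obtain ⟨h0, heps⟩ := mseq_eps hf
    exact bridge f (hKey f heps h0)
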